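/- arXiv:2302.06653 — 6 statements merged into one kernel-verified Lean document; each statement's English description precedes it below -/
import Mathlib

section
/- Let H be a multigraph on vertex set {s,w,z} whose only multiedges are sw and wz, with arbitrary multiplicities (so the underlying simple graph of H is the path s–w–z). Then for every timefunction λ : E(H) → ℕ∖{0} in which no two parallel edges are active at the same timestep, maxD(H,λ,s,z) = minC(H,λ,s,z). -/
/-- A (finite, loopless) multigraph: a vertex type, an edge type, and an
endpoints function assigning to each edge an unordered pair of distinct vertices. -/
structure Multigraph where
  V : Type
  E : Type
  fintypeV : Fintype V
  decEqV : DecidableEq V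
  fintypeE : Fintype E
  decEqE : DecidableEq E
  ends : E → Sym2 V
  loopless : ∀ e, ¬ (ends e).IsDiag

attribute [instance] Multigraph.fintypeV Multigraph.decEqV Multigraph.fintypeE Multigraph.decEqE

/-- A temporal `s,z`-path in the temporal graph `(G, lam)`: an alternating sequence of
pairwise distinct vertices and edges, starting at `s`, ending at `z`, whose edges appear
at non-decreasing timesteps. -/
structure TPath (G : Multigraph) (lam : G.E → ℕ) (s z : G.V) where
  verts : List G.V
  edges : List G.E
  len_eq : verts.length = edges.length + 1
  head_eq : verts.head? = some s
  last_eq : verts.getLast? = some z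
  nodup : verts.Nodup
  ends_eq : ∀ (i : ℕ) (h : i < edges.length),
      G.ends (edges.get ⟨i, h⟩) = s(verts.get ⟨i, by omega⟩, verts.get ⟨i + 1, by omega⟩)
  mono : List.Chain' (· ≤ ·) (edges.map lam)

/-- The set of timesteps at which a temporal path is active. -/
def TPath.times {G : Multigraph} {lam : G.E → ℕ} {s z : G.V} (P : TPath G lam s z) : Set ℕ :=
  {t | ∃ e ∈ P.edges, lam e = t}

/-- Two temporal `s,z`-paths are snapshot disjoint if they are not both active at any
common timestep. -/
def SnapDisjoint {G : Multigraph} {lam : G.E → ℕ} {s z : G.V} (P Q : TPath G lam s z) : Prop :=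
  P.times ∩ Q.times = ∅

/-- A set `S` of timesteps is a snapshot `s,z`-cut if every temporal `s,z`-path uses an
edge active at some timestep in `S`. -/
def IsSnapCut (G : Multigraph) (lam : G.E → ℕ) (s z : G.V) (S : Set ℕ) : Prop :=
  ∀ P : TPath G lam s z, ∃ e ∈ P.edges, lam e ∈ S

/-- `maxD G lam s z`: the maximum number of pairwise snapshot disjoint temporal `s,z`-paths. -/
noncomputable def maxD (G : Multigraph) (lam : G.E → ℕ) (s z : G.V) : ℕ :=
  sSup {k | ∃ f : Fin k → TPath G lam s z, ∀ i j, i ≠ j → SnapDisjoint (f i) (f j)}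

/-- `minC G lam s z`: the minimum size of a snapshot `s,z`-cut. -/
noncomputable def minC (G : Multigraph) (lam : G.E → ℕ) (s z : G.V) : ℕ :=
  sInf {h | ∃ S : Finset ℕ, S.card = h ∧ IsSnapCut G lam s z ↑S}

/-- A proper timefunction: each edge is active at a positive timestep, and no two parallel
edges are active at the same timestep. -/
def ProperTime (G : Multigraph) (lam : G.E → ℕ) : Prop :=
  (∀ e, 0 < lam e) ∧ ∀ e f, e ≠ f → G.ends e = G.ends f → lam e ≠ lam f

/-- `G` is Mengerian for time: for every proper timefunction and every pair of distinct
vertices, the maximum number of pairwise snapshot disjoint temporal `s,z`-paths equals the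
minimum size of a snapshot `s,z`-cut. -/
def Mengerian (G : Multigraph) : Prop :=
  ∀ lam : G.E → ℕ, ProperTime G lam → ∀ s z : G.V, s ≠ z →
    maxD G lam s z = minC G lam s z

/-- `H` is a subgraph of `G` (up to isomorphism): `H` embeds into `G`. -/
def IsSubgraph (H G : Multigraph) : Prop :=
  ∃ (fv : H.V → G.V) (fe : H.E → G.E),
    Function.Injective fv ∧ Function.Injective fe ∧
    ∀ e, G.ends (fe e) = (H.ends e).map fv

/-- The m-subdivision of the multiedge `xy` of `G`: delete all edges between `x` and `y`,
add a new vertex (`none`), and join it to each of `x` and `y` by as many parallel edges as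
there were between `x` and `y`. -/
def Multigraph.msubdiv (G : Multigraph) (x y : G.V) : Multigraph where
  V := Option G.V
  E := {e : G.E // G.ends e ≠ s(x, y)} ⊕ ({e : G.E // G.ends e = s(x, y)} × Bool)
  fintypeV := inferInstance
  decEqV := inferInstance
  fintypeE := inferInstance
  decEqE := inferInstance
  ends := fun t =>
    match t with
    | .inl e => (G.ends e.1).map some
    | .inr (_, true) => s(some x, (none : Option G.V))
    | .inr (_, false) => s((none : Option G.V), some y)
  loopless := by
    rintro (⟨e, he⟩ | ⟨e, b⟩)
    · simpa [Sym2.isDiag_map (Option.some_injective _)] using G.loopless e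
    · cases b <;> simp [Sym2.mk_isDiag_iff]

/-- Isomorphism of multigraphs. -/
def MIso (G H : Multigraph) : Prop :=
  ∃ (fv : G.V ≃ H.V) (fe : G.E ≃ H.E), ∀ e, H.ends (fe e) = (G.ends e).map fv

/-- `B` is obtained from `A` by m-subdividing one of its multiedges. -/
def SubdivStep (A B : Multigraph) : Prop :=
  ∃ x y : A.V, (∃ e, A.ends e = s(x, y)) ∧ MIso (A.msubdiv x y) B

/-- `H` is an m-topological minor of `G`: some subgraph of `G` can be obtained from `H` by
a sequence of m-subdivisions. -/
def IsMTopMinor (H G : Multigraph) : Prop :=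
  ∃ K, Relation.ReflTransGen SubdivStep H K ∧ IsSubgraph K G

/-- The multigraph obtained from `G` by keeping only the edges satisfying `P`. -/
def Multigraph.restrictE (G : Multigraph) (P : G.E → Prop) [DecidablePred P] : Multigraph where
  V := G.V
  E := {e : G.E // P e}
  fintypeV := G.fintypeV
  decEqV := G.decEqV
  fintypeE := inferInstance
  decEqE := inferInstance
  ends := fun e => G.ends e.1
  loopless := fun e => G.loopless e.1

/-- The underlying simple graph of a multigraph. -/
def Multigraph.simple (G : Multigraph) : SimpleGraph G.V where
  Adj u v := ∃ e, G.ends e = s(u, v)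
  symm := by
    constructor
    rintro u v ⟨e, he⟩
    exact ⟨e, by rw [he, Sym2.eq_swap]⟩
  loopless := by
    constructor
    rintro u ⟨e, he⟩
    exact G.loopless e (by rw [he]; exact Sym2.mk_isDiag_iff.2 rfl)

section Aux

variable {G : Multigraph} {lam : G.E → ℕ} {s w z : G.V}

private lemma path_struct (hsw : s ≠ w) (hwz : w ≠ z) (hsz : s ≠ z)
    (hverts : ∀ u : G.V, u = s ∨ u = w ∨ u = z)
    (hedges : ∀ e : G.E, G.ends e = s(s, w) ∨ G.ends e = s(w, z))
    (P : TPath G lam s z) :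
    ∃ e1 e2, P.edges = [e1, e2] ∧ G.ends e1 = s(s, w) ∧ G.ends e2 = s(w, z) ∧
      lam e1 ≤ lam e2 := by
  classical
  have hsub : (Finset.univ : Finset G.V) ⊆ {s, w, z} := by
    intro u _
    rcases hverts u with h | h | h <;> simp [h]
  have hcard : Fintype.card G.V ≤ 3 := by
    have h1 := Finset.card_le_card hsub
    have h2 : ({s, w, z} : Finset G.V).card ≤ 3 := by
      apply le_trans (Finset.card_insert_le _ _)
      have := Finset.card_insert_le w ({z} : Finset G.V)
      simp at this ⊢
      omega
    rw [Finset.card_univ] at h1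
    omega
  obtain ⟨verts, edges, hlen, hhead, hlast, hnodup, hends, hmono⟩ := P
  simp only at hends hmono ⊢
  have hvlen : verts.length ≤ 3 := le_trans hnodup.length_le_card hcard
  have he2 : edges.length = 2 := by
    have hcases : edges.length = 0 ∨ edges.length = 1 ∨ edges.length = 2 := by omega
    rcases hcases with hE | hE | hE
    · exfalso
      obtain ⟨v, hv⟩ := List.length_eq_one_iff.1 (by omega : verts.length = 1)
      subst hv
      simp at hhead hlast
      exact hsz (hhead ▸ hlast ▸ rfl)
    · exfalso
      obtain ⟨a, b, hv⟩ := List.length_eq_two.1 (by omega : verts.length = 2)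
      obtain ⟨e, hev⟩ := List.length_eq_one_iff.1 hE
      subst hv hev
      simp at hhead hlast
      have h3 := hends 0 (by simp)
      simp at h3
      rw [hhead, hlast] at h3
      rcases hedges e with h4 | h4 <;> rw [h4, Sym2.eq_iff] at h3
      · rcases h3 with ⟨_, h6⟩ | ⟨h5, _⟩
        · exact hwz h6
        · exact hsz h5
      · rcases h3 with ⟨h5, _⟩ | ⟨h5, _⟩
        · exact hsw h5.symm
        · exact hwz h5
    · exact hE
  obtain ⟨a, b, c, hv⟩ := List.length_eq_three.1 (by omega : verts.length = 3)
  obtain ⟨e1, e2, hev⟩ := List.length_eq_two.1 he2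
  subst hv hev
  simp at hhead hlast
  have h3 := hends 0 (by simp)
  have h4 := hends 1 (by simp)
  simp at h3 h4
  rw [hhead] at h3
  rw [hlast] at h4
  have hbw : b = w ∧ G.ends e1 = s(s, w) := by
    rcases hedges e1 with h5 | h5 <;> rw [h5, Sym2.eq_iff] at h3
    · rcases h3 with ⟨_, h7⟩ | ⟨_, h7⟩
      · exact ⟨h7.symm, h5⟩
      · exact absurd h7.symm hsw
    · rcases h3 with ⟨h6, _⟩ | ⟨_, h7⟩
      · exact absurd h6.symm hsw
      · exact absurd h7.symm hsz
  obtain ⟨hb, hE1⟩ := hbw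
  rw [hb] at h4
  have hE2 : G.ends e2 = s(w, z) := by
    rcases hedges e2 with h5 | h5
    · exfalso
      rw [h5, Sym2.eq_iff] at h4
      rcases h4 with ⟨h6, _⟩ | ⟨h6, _⟩
      · exact hsw h6
      · exact hsz h6
    · exact h5
  simp at hmono
  exact ⟨e1, e2, rfl, hE1, hE2, List.isChain_pair.1 hmono⟩

private def mkPath (hsw : s ≠ w) (hwz : w ≠ z) (hsz : s ≠ z)
    (lam : G.E → ℕ) (e1 e2 : G.E) (h1 : G.ends e1 = s(s, w)) (h2 : G.ends e2 = s(w, z))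
    (hle : lam e1 ≤ lam e2) : TPath G lam s z where
  verts := [s, w, z]
  edges := [e1, e2]
  len_eq := rfl
  head_eq := rfl
  last_eq := rfl
  nodup := by simp [hsw, hwz, hsz]
  ends_eq := by
    intro i h
    simp at h
    interval_cases i
    · exact h1
    · exact h2
  mono := by exact List.isChain_pair.2 hle

private lemma times_eq (P : TPath G lam s z) {e1 e2 : G.E} (h : P.edges = [e1, e2]) :
    P.times = {lam e1, lam e2} := by
  ext x
  simp only [TPath.times, Set.mem_setOf_eq, h, Set.mem_insert_iff, Set.mem_singleton_iff]
  constructor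
  · rintro ⟨e, he, rfl⟩
    simp at he
    rcases he with rfl | rfl
    · exact Or.inl rfl
    · exact Or.inr rfl
  · rintro (rfl | rfl)
    · exact ⟨e1, by simp, rfl⟩
    · exact ⟨e2, by simp, rfl⟩

private lemma maxD_bound {G : Multigraph} {lam : G.E → ℕ} {s z : G.V}
    (S : Finset ℕ) (hS : IsSnapCut G lam s z ↑S) :
    ∀ k ∈ {k | ∃ f : Fin k → TPath G lam s z, ∀ i j, i ≠ j → SnapDisjoint (f i) (f j)},
      k ≤ S.card := by
  rintro k ⟨f, hf⟩
  classical
  choose e he1 he2 using fun i => hS (f i)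
  have hinj : Function.Injective (fun i => lam (e i)) := by
    intro i j hij
    by_contra hne
    have h1 : lam (e i) ∈ (f i).times := ⟨e i, he1 i, rfl⟩
    have h2 : lam (e i) ∈ (f j).times := ⟨e j, he1 j, hij.symm⟩
    have := hf i j hne
    rw [SnapDisjoint, Set.eq_empty_iff_forall_notMem] at this
    exact this _ ⟨h1, h2⟩
  calc k = (Finset.univ : Finset (Fin k)).card := by simp
    _ ≤ S.card := Finset.card_le_card_of_injOn (fun i => lam (e i))
        (fun i _ => he2 i) (hinj.injOn)

end Aux
private lemma filt_le (X : Finset ℕ) (c : ℕ) (p : ℕ → Prop) [DecidablePred p] :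
    (X.filter p).card ≤ ((X.erase c).filter p).card + 1 := by
  have hsub : X.filter p ⊆ insert c ((X.erase c).filter p) := by
    intro a ha
    rw [Finset.mem_filter] at ha
    by_cases hac : a = c
    · exact hac ▸ Finset.mem_insert_self _ _
    · exact Finset.mem_insert_of_mem (Finset.mem_filter.2 ⟨Finset.mem_erase.2 ⟨hac, ha.1⟩, ha.2⟩)
  calc (X.filter p).card ≤ (insert c ((X.erase c).filter p)).card := Finset.card_le_card hsub
    _ ≤ ((X.erase c).filter p).card + 1 := Finset.card_insert_le _ _

private lemma filt_le' (X : Finset ℕ) (c : ℕ) (p : ℕ → Prop) [DecidablePred p] (hc : ¬ p c) :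
    (X.filter p).card ≤ ((X.erase c).filter p).card := by
  apply Finset.card_le_card
  intro a ha
  rw [Finset.mem_filter] at ha
  have hac : a ≠ c := fun h => hc (h ▸ ha.2)
  exact Finset.mem_filter.2 ⟨Finset.mem_erase.2 ⟨hac, ha.1⟩, ha.2⟩

private lemma cons_disj {k : ℕ} (pa pb : Fin k → ℕ) (a0 b0 : ℕ)
    (hdisj : ∀ i j, i ≠ j → pa i ≠ pa j ∧ pa i ≠ pb j ∧ pb i ≠ pa j ∧ pb i ≠ pb j)
    (ha : ∀ m, pa m ≠ a0) (hab : ∀ m, pa m ≠ b0) (hba : ∀ m, pb m ≠ a0) (hb : ∀ m, pb m ≠ b0) :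
    ∀ i j : Fin (k + 1), i ≠ j →
      (Fin.cons a0 pa : Fin (k + 1) → ℕ) i ≠ (Fin.cons a0 pa : Fin (k + 1) → ℕ) j ∧
      (Fin.cons a0 pa : Fin (k + 1) → ℕ) i ≠ (Fin.cons b0 pb : Fin (k + 1) → ℕ) j ∧
      (Fin.cons b0 pb : Fin (k + 1) → ℕ) i ≠ (Fin.cons a0 pa : Fin (k + 1) → ℕ) j ∧
      (Fin.cons b0 pb : Fin (k + 1) → ℕ) i ≠ (Fin.cons b0 pb : Fin (k + 1) → ℕ) j := by
  intro i j hij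
  obtain rfl | ⟨i', rfl⟩ := Fin.eq_zero_or_eq_succ i <;>
    obtain rfl | ⟨j', rfl⟩ := Fin.eq_zero_or_eq_succ j
  · exact absurd rfl hij
  · simp only [Fin.cons_zero, Fin.cons_succ]
    exact ⟨(ha j').symm, (hba j').symm, (hab j').symm, (hb j').symm⟩
  · simp only [Fin.cons_zero, Fin.cons_succ]
    exact ⟨ha i', hab i', hba i', hb i'⟩
  · simp only [Fin.cons_succ]
    exact hdisj i' j' (fun hh => hij (by rw [hh]))

private lemma core (n : ℕ) : ∀ A B : Finset ℕ, A.card + B.card ≤ n →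
    ∃ (k t : ℕ) (pa pb : Fin k → ℕ),
      (∀ i, pa i ∈ A) ∧ (∀ i, pb i ∈ B) ∧ (∀ i, pa i ≤ pb i) ∧
      (∀ i j, i ≠ j → pa i ≠ pa j ∧ pa i ≠ pb j ∧ pb i ≠ pa j ∧ pb i ≠ pb j) ∧
      (A.filter (· < t)).card + (B.filter (t ≤ ·)).card ≤ k := by
  induction n with
  | zero =>
    intro A B h
    have hA : A = ∅ := Finset.card_eq_zero.1 (by omega)
    have hB : B = ∅ := Finset.card_eq_zero.1 (by omega)
    exact ⟨0, 0, Fin.elim0, Fin.elim0, fun i => i.elim0, fun i => i.elim0, fun i => i.elim0,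
      fun i => i.elim0, by simp [hA, hB]⟩
  | succ n ih =>
    intro A B h
    by_cases hAB : ∃ c, c ∈ A ∧ c ∈ B
    · obtain ⟨c, hcA, hcB⟩ := hAB
      have hrec : (A.erase c).card + (B.erase c).card ≤ n := by
        rw [Finset.card_erase_of_mem hcA, Finset.card_erase_of_mem hcB]
        have h1 : 1 ≤ A.card := Finset.card_pos.2 ⟨c, hcA⟩
        have h2 : 1 ≤ B.card := Finset.card_pos.2 ⟨c, hcB⟩
        omega
      obtain ⟨k', t', pa', pb', hpa', hpb', hle', hdisj', hcut'⟩ := ih _ _ hrec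
      have hane : ∀ m, pa' m ≠ c := fun m => Finset.ne_of_mem_erase (hpa' m)
      have hbne : ∀ m, pb' m ≠ c := fun m => Finset.ne_of_mem_erase (hpb' m)
      have hcut : (A.filter (· < t')).card + (B.filter (t' ≤ ·)).card ≤ k' + 1 := by
        by_cases hct : c < t'
        · have hA2 := filt_le A c (· < t')
          have hB2 := filt_le' B c (t' ≤ ·) (by omega)
          omega
        · have hA2 := filt_le' A c (· < t') (by omega)
          have hB2 := filt_le B c (t' ≤ ·)
          omega
      refine ⟨k' + 1, t', Fin.cons c pa', Fin.cons c pb', ?_, ?_, ?_,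
        cons_disj pa' pb' c c hdisj' hane hane hbne hbne, hcut⟩
      · intro i
        refine Fin.cases hcA (fun j => Finset.mem_of_mem_erase (hpa' j)) i
      · intro i
        refine Fin.cases hcB (fun j => Finset.mem_of_mem_erase (hpb' j)) i
      · intro i
        refine Fin.cases (le_refl c) hle' i
    · push_neg at hAB
      by_cases hpair : ∃ a ∈ A, ∃ b ∈ B, a ≤ b
      · obtain ⟨a, haA, b, hbB, hab⟩ := hpair
        have hAne : A.Nonempty := ⟨a, haA⟩
        set a0 := A.min' hAne with ha0
        have ha0A : a0 ∈ A := A.min'_mem hAne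
        have hBge : (B.filter (a0 ≤ ·)).Nonempty :=
          ⟨b, Finset.mem_filter.2 ⟨hbB, le_trans (A.min'_le a haA) hab⟩⟩
        set b0 := (B.filter (a0 ≤ ·)).min' hBge with hb0
        have hb0mem := (B.filter (a0 ≤ ·)).min'_mem hBge
        rw [Finset.mem_filter] at hb0mem
        obtain ⟨hb0B, ha0b0⟩ := hb0mem
        have hrec : (A.erase a0).card + (B.erase b0).card ≤ n := by
          rw [Finset.card_erase_of_mem ha0A, Finset.card_erase_of_mem hb0B]
          have h1 : 1 ≤ A.card := Finset.card_pos.2 ⟨a0, ha0A⟩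
          have h2 : 1 ≤ B.card := Finset.card_pos.2 ⟨b0, hb0B⟩
          omega
        obtain ⟨k', t', pa', pb', hpa', hpb', hle', hdisj', hcut'⟩ := ih _ _ hrec
        have hane : ∀ m, pa' m ≠ a0 := fun m => Finset.ne_of_mem_erase (hpa' m)
        have hbne : ∀ m, pb' m ≠ b0 := fun m => Finset.ne_of_mem_erase (hpb' m)
        have hane2 : ∀ m, pa' m ≠ b0 := fun m hh =>
          hAB b0 (hh ▸ Finset.mem_of_mem_erase (hpa' m)) hb0B
        have hbne2 : ∀ m, pb' m ≠ a0 := fun m hh =>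
          hAB a0 ha0A (hh ▸ Finset.mem_of_mem_erase (hpb' m))
        have hmin : ∀ x ∈ A, a0 ≤ x := fun x hx => A.min'_le x hx
        have hminB : ∀ x ∈ B, a0 ≤ x → b0 ≤ x := fun x hx hax =>
          (B.filter (a0 ≤ ·)).min'_le x (Finset.mem_filter.2 ⟨hx, hax⟩)
        have hcut : ∃ t, (A.filter (· < t)).card + (B.filter (t ≤ ·)).card ≤ k' + 1 := by
          by_cases h1 : t' ≤ a0
          · refine ⟨t', ?_⟩
            have hAe : A.filter (· < t') = ∅ := by
              apply Finset.filter_eq_empty_iff.2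
              intro x hx
              have := hmin x hx
              omega
            have hB2 := filt_le B b0 (t' ≤ ·)
            rw [hAe]
            simp only [Finset.card_empty, Nat.zero_add]
            omega
          · by_cases h2 : b0 < t'
            · refine ⟨t', ?_⟩
              have hA2 := filt_le A a0 (· < t')
              have hB2 := filt_le' B b0 (t' ≤ ·) (by omega)
              omega
            · refine ⟨a0, ?_⟩
              have hAe : A.filter (· < a0) = ∅ := by
                apply Finset.filter_eq_empty_iff.2
                intro x hx
                have := hmin x hx
                omega
              have hsub : B.filter (a0 ≤ ·) ⊆ insert b0 ((B.erase b0).filter (t' ≤ ·)) := by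
                intro x hx
                rw [Finset.mem_filter] at hx
                by_cases hxb : x = b0
                · exact hxb ▸ Finset.mem_insert_self _ _
                · refine Finset.mem_insert_of_mem (Finset.mem_filter.2
                    ⟨Finset.mem_erase.2 ⟨hxb, hx.1⟩, ?_⟩)
                  have := hminB x hx.1 hx.2
                  omega
              have hc := (Finset.card_le_card hsub).trans (Finset.card_insert_le _ _)
              rw [hAe]
              simp only [Finset.card_empty, Nat.zero_add]
              omega
        obtain ⟨t, ht⟩ := hcut
        refine ⟨k' + 1, t, Fin.cons a0 pa', Fin.cons b0 pb', ?_, ?_, ?_,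
          cons_disj pa' pb' a0 b0 hdisj' hane hane2 hbne2 hbne, ht⟩
        · intro i
          refine Fin.cases ha0A (fun j => Finset.mem_of_mem_erase (hpa' j)) i
        · intro i
          refine Fin.cases hb0B (fun j => Finset.mem_of_mem_erase (hpb' j)) i
        · intro i
          refine Fin.cases ha0b0 hle' i
      · push_neg at hpair
        by_cases hAne : A.Nonempty
        · refine ⟨0, A.min' hAne, Fin.elim0, Fin.elim0, fun i => i.elim0, fun i => i.elim0,
            fun i => i.elim0, fun i => i.elim0, ?_⟩
          have hAe : A.filter (· < A.min' hAne) = ∅ := by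
            apply Finset.filter_eq_empty_iff.2
            intro x hx
            have := A.min'_le x hx
            omega
          have hBe : B.filter (A.min' hAne ≤ ·) = ∅ := by
            apply Finset.filter_eq_empty_iff.2
            intro x hx hcon
            exact absurd hcon (not_le.2 (hpair _ (A.min'_mem hAne) x hx))
          rw [hAe, hBe]
          simp
        · rw [Finset.not_nonempty_iff_eq_empty] at hAne
          refine ⟨0, B.sup id + 1, Fin.elim0, Fin.elim0, fun i => i.elim0, fun i => i.elim0,
            fun i => i.elim0, fun i => i.elim0, ?_⟩
          have hBe : B.filter (B.sup id + 1 ≤ ·) = ∅ := by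
            apply Finset.filter_eq_empty_iff.2
            intro x hx
            have : x ≤ B.sup id := Finset.le_sup (f := id) hx
            omega
          rw [hAne, hBe]
          simp

/-- for a multigraph on vertex set `{s, w, z}` whose only multiedges are
`sw` and `wz` (arbitrary multiplicities), and any timefunction in which no two parallel
edges are active at the same timestep, `maxD = minC`. -/
theorem stmt13 (G : Multigraph) (s w z : G.V)
    (hsw : s ≠ w) (hwz : w ≠ z) (hsz : s ≠ z)
    (hverts : ∀ u : G.V, u = s ∨ u = w ∨ u = z)
    (hedges : ∀ e : G.E, G.ends e = s(s, w) ∨ G.ends e = s(w, z))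
    (lam : G.E → ℕ) (hlam : ProperTime G lam) :
    maxD G lam s z = minC G lam s z := by
  classical
  set A : Finset ℕ := (Finset.univ.filter fun e => G.ends e = s(s, w)).image lam with hA
  set B : Finset ℕ := (Finset.univ.filter fun e => G.ends e = s(w, z)).image lam with hB
  obtain ⟨k, t, pa, pb, hpaA, hpbB, hle, hdisj, hcut⟩ := core (A.card + B.card) A B le_rfl
  set S : Finset ℕ := A.filter (· < t) ∪ B.filter (t ≤ ·) with hS
  have hScut : IsSnapCut G lam s z ↑S := by
    intro P
    obtain ⟨e1, e2, hP, h1, h2, h12⟩ := path_struct hsw hwz hsz hverts hedges P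
    by_cases hlt : lam e1 < t
    · refine ⟨e1, by simp [hP], ?_⟩
      have : lam e1 ∈ A := Finset.mem_image.2 ⟨e1, by simp [h1], rfl⟩
      simp only [hS, Finset.coe_union, Set.mem_union, Finset.coe_filter, Set.mem_setOf_eq]
      exact Or.inl ⟨this, hlt⟩
    · refine ⟨e2, by simp [hP], ?_⟩
      have : lam e2 ∈ B := Finset.mem_image.2 ⟨e2, by simp [h2], rfl⟩
      simp only [hS, Finset.coe_union, Set.mem_union, Finset.coe_filter, Set.mem_setOf_eq]
      exact Or.inr ⟨this, by omega⟩
  have hcardS : S.card ≤ k := le_trans (Finset.card_union_le _ _) hcut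
  -- construct the family of k pairwise snapshot disjoint paths
  have hedgeA : ∀ i, ∃ e, G.ends e = s(s, w) ∧ lam e = pa i := by
    intro i
    have := hpaA i
    rw [hA] at this
    obtain ⟨e, he, hee⟩ := Finset.mem_image.1 this
    exact ⟨e, (Finset.mem_filter.1 he).2, hee⟩
  have hedgeB : ∀ i, ∃ e, G.ends e = s(w, z) ∧ lam e = pb i := by
    intro i
    have := hpbB i
    rw [hB] at this
    obtain ⟨e, he, hee⟩ := Finset.mem_image.1 this
    exact ⟨e, (Finset.mem_filter.1 he).2, hee⟩
  choose ea hea1 hea2 using hedgeA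
  choose eb heb1 heb2 using hedgeB
  let f : Fin k → TPath G lam s z := fun i =>
    mkPath hsw hwz hsz lam (ea i) (eb i) (hea1 i) (heb1 i)
      (by rw [hea2 i, heb2 i]; exact hle i)
  have hfd : ∀ i j, i ≠ j → SnapDisjoint (f i) (f j) := by
    intro i j hij
    obtain ⟨d1, d2, d3, d4⟩ := hdisj i j hij
    rw [SnapDisjoint, times_eq (f i) rfl, times_eq (f j) rfl,
      hea2 i, heb2 i, hea2 j, heb2 j]
    ext x
    simp only [Set.mem_inter_iff, Set.mem_insert_iff, Set.mem_singleton_iff,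
      Set.mem_empty_iff_false, iff_false, not_and]
    rintro (rfl | rfl) <;> rintro (h | h) <;> simp_all
  have hDset : k ∈ {k | ∃ f : Fin k → TPath G lam s z,
      ∀ i j, i ≠ j → SnapDisjoint (f i) (f j)} := ⟨f, hfd⟩
  have hbdd : BddAbove {k | ∃ f : Fin k → TPath G lam s z,
      ∀ i j, i ≠ j → SnapDisjoint (f i) (f j)} :=
    ⟨S.card, fun j hj => maxD_bound S hScut j hj⟩
  have h1 : k ≤ maxD G lam s z := le_csSup hbdd hDset
  have h2 : minC G lam s z ≤ S.card := Nat.sInf_le ⟨S, rfl, hScut⟩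
  have h3 : maxD G lam s z ≤ minC G lam s z := by
    have hne : {h | ∃ S : Finset ℕ, S.card = h ∧ IsSnapCut G lam s z ↑S}.Nonempty :=
      ⟨S.card, S, rfl, hScut⟩
    obtain ⟨S0, hS0card, hS0⟩ := Nat.sInf_mem hne
    rw [maxD, minC]
    refine csSup_le ⟨0, Fin.elim0, fun i => i.elim0⟩ ?_
    intro j hj
    calc j ≤ S0.card := maxD_bound S0 hS0 j hj
      _ = sInf {h | ∃ S : Finset ℕ, S.card = h ∧ IsSnapCut G lam s z ↑S} := hS0card
  omega
end

section
/- Let H be a multigraph on vertex set {s,w,z} whose only multiedges are sw and wz, let λ be a timefunction in which no two parallel edges are active at the same timestep, and suppose f,g ∈ E(H) satisfy λ(f) = λ(g) = α with f ≠ g (so one of f,g has endpoints s,w and the other has endpoints w,z). Let H′ = H − {f,g}. Then maxD(H,λ,s,z) = maxD(H′,λ,s,z) + 1 and minC(H,λ,s,z) = minC(H′,λ,s,z) + 1. -/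
section Aux

variable {H : Multigraph} {lam : H.E → ℕ} {s w z : H.V}

/-- Build the 2-edge temporal path `s, w, z`. -/
def s14mk2 (hsw : s ≠ w) (hwz : w ≠ z) (hsz : s ≠ z)
    (e1 e2 : H.E) (h1 : H.ends e1 = s(s, w)) (h2 : H.ends e2 = s(w, z))
    (hle : lam e1 ≤ lam e2) : TPath H lam s z where
  verts := [s, w, z]
  edges := [e1, e2]
  len_eq := rfl
  head_eq := rfl
  last_eq := rfl
  nodup := by simp [hsw, hwz, hsz]
  ends_eq := by
    intro i h
    simp only [List.length_cons, List.length_nil] at h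
    interval_cases i <;> simp [h1, h2]
  mono := List.isChain_pair.mpr hle

lemma s14mk2_edges (hsw : s ≠ w) (hwz : w ≠ z) (hsz : s ≠ z)
    (e1 e2 : H.E) (h1 : H.ends e1 = s(s, w)) (h2 : H.ends e2 = s(w, z))
    (hle : lam e1 ≤ lam e2) :
    (s14mk2 hsw hwz hsz e1 e2 h1 h2 hle).edges = [e1, e2] := rfl

lemma s14times_mem {s z : H.V} (P : TPath H lam s z) {e1 e2 : H.E}
    (h : P.edges = [e1, e2]) (t : ℕ) :
    t ∈ P.times ↔ t = lam e1 ∨ t = lam e2 := by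
  simp only [TPath.times, h, Set.mem_setOf_eq, List.mem_cons, List.not_mem_nil, or_false]
  aesop

lemma s14shape (hsw : s ≠ w) (hwz : w ≠ z) (hsz : s ≠ z)
    (hverts : ∀ u : H.V, u = s ∨ u = w ∨ u = z)
    (hedges : ∀ e : H.E, H.ends e = s(s, w) ∨ H.ends e = s(w, z))
    (P : TPath H lam s z) :
    ∃ e1 e2, P.edges = [e1, e2] ∧ H.ends e1 = s(s, w) ∧ H.ends e2 = s(w, z) ∧
      lam e1 ≤ lam e2 := by
  have hcard : Fintype.card H.V ≤ 3 := by
    have hsurj : Function.Surjective (fun i : Fin 3 => [s, w, z].get i) := by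
      intro u
      rcases hverts u with h | h | h
      · exact ⟨0, h.symm⟩
      · exact ⟨1, h.symm⟩
      · exact ⟨2, h.symm⟩
    simpa using Fintype.card_le_of_surjective _ hsurj
  have hlen3 : P.verts.length ≤ 3 := le_trans (P.nodup.length_le_card) hcard
  have hlen := P.len_eq
  -- edges length ≠ 0
  have h0 : P.edges.length ≠ 0 := by
    intro h
    have hv1 : P.verts.length = 1 := by omega
    obtain ⟨a, ha⟩ := List.length_eq_one_iff.mp hv1
    have h1 := P.head_eq
    have h2 := P.last_eq
    rw [ha] at h1 h2
    simp at h1 h2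
    exact hsz (h1.symm.trans h2)
  have h1 : P.edges.length ≠ 1 := by
    intro h
    have hv2 : P.verts.length = 2 := by omega
    obtain ⟨aa, bb, hv⟩ := List.length_eq_two.mp hv2
    obtain ⟨e, he⟩ := List.length_eq_one_iff.mp h
    have hh := P.head_eq
    have hl := P.last_eq
    rw [hv] at hh hl
    simp at hh hl
    have hends := P.ends_eq 0 (by omega)
    simp [he, hv, hh, hl] at hends
    rcases hedges e with h' | h' <;> rw [h'] at hends <;>
      rw [Sym2.eq_iff] at hends <;> tauto
  have h2 : P.edges.length = 2 := by omega
  obtain ⟨e1, e2, he⟩ := List.length_eq_two.mp h2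
  have hv3 : P.verts.length = 3 := by omega
  obtain ⟨aa, bb, cc, hv⟩ := List.length_eq_three.mp hv3
  have hh := P.head_eq
  have hl := P.last_eq
  rw [hv] at hh hl
  simp at hh hl
  have hends0 := P.ends_eq 0 (by omega)
  have hends1 := P.ends_eq 1 (by omega)
  simp [he, hv, hh, hl] at hends0 hends1
  -- bb = w
  have hbw : bb = w := by
    rcases hedges e1 with h' | h' <;> rw [h'] at hends0 <;>
      rw [Sym2.eq_iff] at hends0 <;> tauto
  rw [hbw] at hends0 hends1
  have hmono := P.mono
  rw [he] at hmono
  simp at hmono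
  exact ⟨e1, e2, he, hends0, hends1, List.isChain_pair.mp hmono⟩

lemma s14sd {s z : H.V} {P Q : TPath H lam s z}
    (h : ∀ t, t ∈ P.times → t ∉ Q.times) : SnapDisjoint P Q := by
  rw [SnapDisjoint, Set.eq_empty_iff_forall_notMem]
  rintro t ⟨h1, h2⟩
  exact h t h1 h2

lemma s14sd' {s z : H.V} {P Q : TPath H lam s z}
    (h : SnapDisjoint P Q) : ∀ t, t ∈ P.times → t ∉ Q.times := by
  rw [SnapDisjoint, Set.eq_empty_iff_forall_notMem] at h
  exact fun t h1 h2 => h t ⟨h1, h2⟩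

/-- The set whose sSup is maxD. -/
def s14D (G : Multigraph) (lam : G.E → ℕ) (s z : G.V) : Set ℕ :=
  {k | ∃ f : Fin k → TPath G lam s z, ∀ i j, i ≠ j → SnapDisjoint (f i) (f j)}

lemma s14maxD_eq (G : Multigraph) (lam : G.E → ℕ) (s z : G.V) :
    maxD G lam s z = sSup (s14D G lam s z) := rfl

lemma s14D_zero (G : Multigraph) (lam : G.E → ℕ) (s z : G.V) : 0 ∈ s14D G lam s z :=
  ⟨fun i => i.elim0, fun i => i.elim0⟩

lemma s14D_bdd (hsw : s ≠ w) (hwz : w ≠ z) (hsz : s ≠ z)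
    (hverts : ∀ u : H.V, u = s ∨ u = w ∨ u = z)
    (hedges : ∀ e : H.E, H.ends e = s(s, w) ∨ H.ends e = s(w, z)) :
    ∀ k ∈ s14D H lam s z, k ≤ Fintype.card H.E := by
  rintro k ⟨F, hF⟩
  have hch : ∀ i : Fin k, ∃ e1, ∃ e2, (F i).edges = [e1, e2] ∧ H.ends e1 = s(s,w) ∧
      H.ends e2 = s(w, z) ∧ lam e1 ≤ lam e2 :=
    fun i => s14shape hsw hwz hsz hverts hedges (F i)
  choose e1 e2 he _ _ _ using hch
  have hinj : Function.Injective e1 := by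
    intro i j hij
    by_contra hne
    have hd := s14sd' (hF i j hne) (lam (e1 i))
    apply hd
    · exact (s14times_mem (F i) (he i) _).mpr (Or.inl rfl)
    · exact (s14times_mem (F j) (he j) _).mpr (Or.inl (by rw [hij]))
  simpa using Fintype.card_le_of_injective e1 hinj

lemma s14D_bddAbove (hsw : s ≠ w) (hwz : w ≠ z) (hsz : s ≠ z)
    (hverts : ∀ u : H.V, u = s ∨ u = w ∨ u = z)
    (hedges : ∀ e : H.E, H.ends e = s(s, w) ∨ H.ends e = s(w, z)) :
    BddAbove (s14D H lam s z) :=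
  ⟨Fintype.card H.E, fun k hk => s14D_bdd hsw hwz hsz hverts hedges k hk⟩

lemma s14maxD_mem (hsw : s ≠ w) (hwz : w ≠ z) (hsz : s ≠ z)
    (hverts : ∀ u : H.V, u = s ∨ u = w ∨ u = z)
    (hedges : ∀ e : H.E, H.ends e = s(s, w) ∨ H.ends e = s(w, z)) :
    maxD H lam s z ∈ s14D H lam s z := by
  rw [s14maxD_eq]
  exact Nat.sSup_mem ⟨0, s14D_zero H lam s z⟩ (s14D_bddAbove hsw hwz hsz hverts hedges)

lemma s14le_maxD (hsw : s ≠ w) (hwz : w ≠ z) (hsz : s ≠ z)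
    (hverts : ∀ u : H.V, u = s ∨ u = w ∨ u = z)
    (hedges : ∀ e : H.E, H.ends e = s(s, w) ∨ H.ends e = s(w, z))
    {k : ℕ} (hk : k ∈ s14D H lam s z) : k ≤ maxD H lam s z :=
  le_csSup (s14D_bddAbove hsw hwz hsz hverts hedges) hk

/-- The set whose sInf is minC. -/
def s14C (G : Multigraph) (lam : G.E → ℕ) (s z : G.V) : Set ℕ :=
  {h | ∃ S : Finset ℕ, S.card = h ∧ IsSnapCut G lam s z ↑S}

lemma s14minC_eq (G : Multigraph) (lam : G.E → ℕ) (s z : G.V) :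
    minC G lam s z = sInf (s14C G lam s z) := rfl

lemma s14C_nonempty (hsw : s ≠ w) (hwz : w ≠ z) (hsz : s ≠ z)
    (hverts : ∀ u : H.V, u = s ∨ u = w ∨ u = z)
    (hedges : ∀ e : H.E, H.ends e = s(s, w) ∨ H.ends e = s(w, z)) :
    (s14C H lam s z).Nonempty := by
  refine ⟨(Finset.image lam Finset.univ).card, Finset.image lam Finset.univ, rfl, ?_⟩
  intro P
  obtain ⟨e1, e2, he, _⟩ := s14shape hsw hwz hsz hverts hedges P
  exact ⟨e1, by rw [he]; simp, by simp⟩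

lemma s14minC_mem (hsw : s ≠ w) (hwz : w ≠ z) (hsz : s ≠ z)
    (hverts : ∀ u : H.V, u = s ∨ u = w ∨ u = z)
    (hedges : ∀ e : H.E, H.ends e = s(s, w) ∨ H.ends e = s(w, z)) :
    minC H lam s z ∈ s14C H lam s z := by
  rw [s14minC_eq]
  exact Nat.sInf_mem (s14C_nonempty hsw hwz hsz hverts hedges)

lemma s14minC_le {k : ℕ} (hk : k ∈ s14C H lam s z) : minC H lam s z ≤ k :=
  Nat.sInf_le hk

end Aux

lemma s14times_def {H : Multigraph} {lam : H.E → ℕ} {s z : H.V} (P : TPath H lam s z) (t : ℕ) :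
    t ∈ P.times ↔ ∃ e ∈ P.edges, lam e = t := Iff.rfl
/-- with `H` on vertex set `{s, w, z}` whose only multiedges are `sw` and
`wz`, a proper timefunction, and two distinct edges `f ≠ g` active at the same timestep
`α`, removing `f` and `g` decreases both `maxD` and `minC` by exactly 1. -/
theorem stmt14 (G : Multigraph) (s w z : G.V)
    (hsw : s ≠ w) (hwz : w ≠ z) (hsz : s ≠ z)
    (hverts : ∀ u : G.V, u = s ∨ u = w ∨ u = z)
    (hedges : ∀ e : G.E, G.ends e = s(s, w) ∨ G.ends e = s(w, z))
    (lam : G.E → ℕ) (hlam : ProperTime G lam)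
    (f g : G.E) (hfg : f ≠ g) (α : ℕ) (hf : lam f = α) (hg : lam g = α) :
    maxD G lam s z
        = maxD (G.restrictE (fun e => e ≠ f ∧ e ≠ g)) (fun e => lam e.1) s z + 1 ∧
    minC G lam s z
        = minC (G.restrictE (fun e => e ≠ f ∧ e ≠ g)) (fun e => lam e.1) s z + 1 := by
  classical
  set G' := G.restrictE (fun e => e ≠ f ∧ e ≠ g) with hG'def
  set lam' : G'.E → ℕ := (fun e => lam e.1) with hlam'def
  have hverts' : ∀ u : G'.V, u = s ∨ u = w ∨ u = z := hverts
  have hedges' : ∀ e : G'.E, G'.ends e = s(s, w) ∨ G'.ends e = s(w, z) := fun e => hedges e.1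
  have hne_ends : G.ends f ≠ G.ends g := fun h => hlam.2 f g hfg h (hf.trans hg.symm)
  obtain ⟨a, b, ha, hb, hya, hyb, hprd⟩ :
      ∃ a b : G.E, G.ends a = s(s, w) ∧ G.ends b = s(w, z) ∧ lam a = α ∧ lam b = α ∧
        (∀ e : G.E, (e ≠ f ∧ e ≠ g) ↔ (e ≠ a ∧ e ≠ b)) := by
    rcases hedges f with h1 | h1 <;> rcases hedges g with h2 | h2
    · exact absurd (h1.trans h2.symm) hne_ends
    · exact ⟨f, g, h1, h2, hf, hg, fun e => Iff.rfl⟩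
    · exact ⟨g, f, h2, h1, hg, hf, fun e => and_comm⟩
    · exact absurd (h1.trans h2.symm) hne_ends
  have keyα : ∀ e : G.E, lam e = α → e = a ∨ e = b := by
    intro e he
    rcases hedges e with h1 | h1
    · left; by_contra hne
      exact hlam.2 e a hne (h1.trans ha.symm) (he.trans hya.symm)
    · right; by_contra hne
      exact hlam.2 e b hne (h1.trans hb.symm) (he.trans hyb.symm)
  -- the special path s,a,w,b,z
  have hab : lam a ≤ lam b := by rw [hya, hyb]
  let Pst : TPath G lam s z := s14mk2 hsw hwz hsz a b ha hb hab
  have hPstE : Pst.edges = [a, b] := rfl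
  have hPst_times : ∀ t, t ∈ Pst.times ↔ t = α := by
    intro t
    rw [s14times_mem Pst hPstE, hya, hyb]
    tauto
  -- lifting paths of G' to G
  have lift : ∀ P' : TPath G' lam' s z, ∃ P : TPath G lam s z,
      (∀ t, t ∈ P.times ↔ t ∈ P'.times) ∧ α ∉ P.times := by
    intro P'
    obtain ⟨E1, E2, hE, h1, h2, hle⟩ := s14shape (H := G') hsw hwz hsz hverts' hedges' P'
    refine ⟨s14mk2 hsw hwz hsz E1.1 E2.1 h1 h2 hle, ?_, ?_⟩
    · intro t
      rw [s14times_mem _ (rfl : (s14mk2 hsw hwz hsz E1.1 E2.1 h1 h2 hle).edges = [E1.1, E2.1]),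
        s14times_mem P' hE]
    · rw [s14times_mem _ (rfl : (s14mk2 hsw hwz hsz E1.1 E2.1 h1 h2 hle).edges = [E1.1, E2.1])]
      rintro (h | h)
      · rcases keyα E1.1 h.symm with rfl | rfl
        · exact ((hprd E1.1).mp E1.2).1 rfl
        · exact ((hprd E1.1).mp E1.2).2 rfl
      · rcases keyα E2.1 h.symm with rfl | rfl
        · exact ((hprd E2.1).mp E2.2).1 rfl
        · exact ((hprd E2.1).mp E2.2).2 rfl
  -- dropping paths of G avoiding α into G'
  have drop : ∀ P : TPath G lam s z, α ∉ P.times → ∃ P' : TPath G' lam' s z,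
      (∀ t, t ∈ P'.times ↔ t ∈ P.times) := by
    intro P hα
    obtain ⟨e1, e2, hE, h1, h2, hle⟩ := s14shape hsw hwz hsz hverts hedges P
    have m1 : lam e1 ≠ α := fun h => hα ((s14times_mem P hE α).mpr (Or.inl h.symm))
    have m2 : lam e2 ≠ α := fun h => hα ((s14times_mem P hE α).mpr (Or.inr h.symm))
    have p1 : e1 ≠ f ∧ e1 ≠ g := ⟨fun h => m1 (h ▸ hf), fun h => m1 (h ▸ hg)⟩
    have p2 : e2 ≠ f ∧ e2 ≠ g := ⟨fun h => m2 (h ▸ hf), fun h => m2 (h ▸ hg)⟩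
    refine ⟨s14mk2 (H := G') hsw hwz hsz ⟨e1, p1⟩ ⟨e2, p2⟩ h1 h2 hle, ?_⟩
    intro t
    rw [s14times_mem (H := G')
      _ (rfl : (s14mk2 (H := G') hsw hwz hsz ⟨e1, p1⟩ ⟨e2, p2⟩ h1 h2 hle).edges = [⟨e1, p1⟩, ⟨e2, p2⟩]),
      s14times_mem P hE]
  -- maxD : lower bound
  obtain ⟨F', hF'⟩ := s14maxD_mem (H := G') hsw hwz hsz hverts' hedges'
  have liftc := lift
  choose up hupt hupα using liftc
  have hstep1 : maxD G' lam' s z + 1 ∈ s14D G lam s z := by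
    refine ⟨fun i => Fin.lastCases Pst (fun j => up (F' j)) i, ?_⟩
    intro i j hij
    rcases Fin.eq_castSucc_or_eq_last i with ⟨i', rfl⟩ | rfl <;>
      rcases Fin.eq_castSucc_or_eq_last j with ⟨j', rfl⟩ | rfl
    · simp only [Fin.lastCases_castSucc]
      refine s14sd fun t ht ht' => ?_
      have hne : i' ≠ j' := fun h => hij (by rw [h])
      exact s14sd' (hF' i' j' hne) t ((hupt (F' i') t).mp ht) ((hupt (F' j') t).mp ht')
    · simp only [Fin.lastCases_castSucc, Fin.lastCases_last]
      refine s14sd fun t ht ht' => ?_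
      have ht2 : t = α := (hPst_times t).mp ht'
      exact hupα (F' i') (ht2 ▸ ht)
    · simp only [Fin.lastCases_castSucc, Fin.lastCases_last]
      refine s14sd fun t ht ht' => ?_
      have ht2 : t = α := (hPst_times t).mp ht
      exact hupα (F' j') (ht2 ▸ ht')
    · exact absurd rfl hij
  -- maxD : upper bound
  have hbound : ∀ k, k ∈ s14D G lam s z → k ≤ maxD G' lam' s z + 1 := by
    rintro k ⟨F, hF⟩
    by_cases hex : ∃ i, α ∈ (F i).times
    · obtain ⟨i0, hi0⟩ := hex
      rcases k with _ | m
      · omega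
      · have hα' : ∀ j : Fin m, α ∉ (F (i0.succAbove j)).times := by
          intro j hj
          exact s14sd' (hF _ _ (Fin.succAbove_ne i0 j)) α hj hi0
        choose dn hdn using fun j : Fin m => drop (F (i0.succAbove j)) (hα' j)
        have hmem : m ∈ s14D G' lam' s z := by
          refine ⟨dn, ?_⟩
          intro i j hij
          refine s14sd fun t ht ht' => ?_
          have hne : i0.succAbove i ≠ i0.succAbove j :=
            fun h => hij (Fin.succAbove_right_injective h)
          exact s14sd' (hF _ _ hne) t ((hdn i t).mp ht) ((hdn j t).mp ht')
        have := s14le_maxD (H := G') hsw hwz hsz hverts' hedges' hmem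
        omega
    · push_neg at hex
      choose dn hdn using fun i : Fin k => drop (F i) (hex i)
      have hmem : k ∈ s14D G' lam' s z :=
        ⟨dn, fun i j hij => s14sd fun t ht ht' =>
          s14sd' (hF i j hij) t ((hdn i t).mp ht) ((hdn j t).mp ht')⟩
      have := s14le_maxD (H := G') hsw hwz hsz hverts' hedges' hmem
      omega
  have hmaxD : maxD G lam s z = maxD G' lam' s z + 1 :=
    le_antisymm (hbound _ (s14maxD_mem hsw hwz hsz hverts hedges))
      (s14le_maxD hsw hwz hsz hverts hedges hstep1)
  refine ⟨hmaxD, ?_⟩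
  -- minC : upper bound
  obtain ⟨S', hS'card, hS'cut⟩ := s14minC_mem (H := G') hsw hwz hsz hverts' hedges'
  have hle1 : minC G lam s z ≤ minC G' lam' s z + 1 := by
    have hcut : IsSnapCut G lam s z ↑(insert α S') := by
      intro P
      by_cases hα : α ∈ P.times
      · obtain ⟨e, he, hle⟩ := (s14times_def P α).mp hα
        exact ⟨e, he, by simp [hle]⟩
      · obtain ⟨P', hP't⟩ := drop P hα
        obtain ⟨E, hE, hES⟩ := hS'cut P'
        have hmem : lam' E ∈ P'.times := (s14times_def P' (lam' E)).mpr ⟨E, hE, rfl⟩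
        obtain ⟨e, he, hle⟩ := (s14times_def P (lam' E)).mp ((hP't _).mp hmem)
        refine ⟨e, he, ?_⟩
        rw [hle]
        simp only [Finset.coe_insert, Set.mem_insert_iff]
        exact Or.inr hES
    have h1 := s14minC_le (⟨insert α S', rfl, hcut⟩ : (insert α S').card ∈ s14C G lam s z)
    have h2 : (insert α S').card ≤ S'.card + 1 := Finset.card_insert_le _ _
    omega
  -- minC : lower bound
  obtain ⟨S, hScard, hScut⟩ := s14minC_mem hsw hwz hsz hverts hedges
  have hαS : α ∈ S := by
    obtain ⟨e, he, hle⟩ := hScut Pst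
    rw [hPstE] at he
    simp only [List.mem_cons, List.not_mem_nil, or_false] at he
    rcases he with rfl | rfl
    · rwa [hya] at hle
    · rwa [hyb] at hle
  have hScard1 : 1 ≤ S.card := Finset.card_pos.mpr ⟨α, hαS⟩
  have hcut' : IsSnapCut G' lam' s z ↑(S.erase α) := by
    intro P'
    obtain ⟨e, he, hle⟩ := hScut (up P')
    have hin : lam e ∈ (up P').times := (s14times_def _ _).mpr ⟨e, he, rfl⟩
    have hne : lam e ≠ α := fun h => hupα P' (h ▸ hin)
    obtain ⟨E, hE, hEe⟩ := (s14times_def P' (lam e)).mp ((hupt P' (lam e)).mp hin)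
    refine ⟨E, hE, ?_⟩
    rw [hEe]
    simp only [Finset.coe_erase, Set.mem_diff, Set.mem_singleton_iff]
    exact ⟨hle, hne⟩
  have h2 := s14minC_le (H := G') (⟨S.erase α, rfl, hcut'⟩ :
    (S.erase α).card ∈ s14C G' lam' s z)
  have herase : (S.erase α).card = S.card - 1 := Finset.card_erase_of_mem hαS
  have hge : minC G' lam' s z + 1 ≤ minC G lam s z := by
    have h3 : minC G' lam' s z ≤ S.card - 1 := herase ▸ h2
    omega
  exact le_antisymm hle1 hge
end

section
/- Let G be a multigraph whose underlying simple graph is a path with endpoints s and z, and suppose some multiedge of G has multiplicity 1. Then for every timefunction λ : E(G) → ℕ∖{0}, maxD(G,λ,s,z) = minC(G,λ,s,z). -/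
set_option maxHeartbeats 1600000

section Aux

variable {G : Multigraph} {lam : G.E → ℕ} {s z : G.V}

lemma tpath_get_zero (P : TPath G lam s z) (h0 : 0 < P.verts.length) :
    P.verts.get ⟨0, h0⟩ = s := by
  have h := P.head_eq
  rw [List.head?_eq_getElem?, List.getElem?_eq_getElem h0] at h
  simpa [List.get_eq_getElem] using h

lemma tpath_get_last (P : TPath G lam s z)
    (h0 : P.verts.length - 1 < P.verts.length) :
    P.verts.get ⟨P.verts.length - 1, h0⟩ = z := by
  have h := P.last_eq
  rw [List.getLast?_eq_getElem?, List.getElem?_eq_getElem h0] at h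
  simpa [List.get_eq_getElem] using h

/-- Key lemma: in the path situation, every temporal path uses the unique edge `e`. -/
lemma key_mem {n : ℕ} (hn : 2 ≤ n) (φ : G.simple ≃g SimpleGraph.pathGraph n)
    (hs : φ s = ⟨0, Nat.lt_of_lt_of_le Nat.zero_lt_two hn⟩)
    (hz : φ z = ⟨n - 1, Nat.sub_lt (Nat.lt_of_lt_of_le Nat.zero_lt_two hn) Nat.one_pos⟩)
    (e : G.E) (he : ∀ f : G.E, G.ends f = G.ends e → f = e)
    (P : TPath G lam s z) : e ∈ P.edges := by
  have hlen := P.len_eq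
  have hb : ∀ i, ∀ hi : i < P.verts.length,
      ((φ (P.verts.get ⟨i, hi⟩)) : Fin n).val = i := by
    intro i
    induction i using Nat.strong_induction_on with
    | _ i ih =>
      intro hi
      match i with
      | 0 =>
        rw [tpath_get_zero P hi, hs]
      | (j+1) =>
        have hj : j < P.edges.length := by omega
        have hadj : G.simple.Adj (P.verts.get ⟨j, by omega⟩)
            (P.verts.get ⟨j+1, by omega⟩) :=
          ⟨P.edges.get ⟨j, hj⟩, P.ends_eq j hj⟩
        have hadj2 : (SimpleGraph.pathGraph n).Adj
            (φ (P.verts.get ⟨j, by omega⟩)) (φ (P.verts.get ⟨j+1, by omega⟩)) :=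
          φ.map_adj_iff.2 hadj
        rw [SimpleGraph.pathGraph_adj] at hadj2
        have hbj : ((φ (P.verts.get ⟨j, by omega⟩)) : Fin n).val = j :=
          ih j (by omega) (by omega)
        rcases hadj2 with h1 | h2
        · omega
        · -- back step: contradiction with nodup
          exfalso
          rw [hbj] at h2
          have hj1 : 1 ≤ j := by
            by_contra h
            omega
          have hjm : j - 1 < P.verts.length := by omega
          have hbjm : ((φ (P.verts.get ⟨j-1, hjm⟩)) : Fin n).val = j - 1 :=
            ih (j-1) (by omega) hjm
          have heq : φ (P.verts.get ⟨j+1, hi⟩) = φ (P.verts.get ⟨j-1, hjm⟩) :=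
            Fin.ext (by omega)
          have heq2 : P.verts.get ⟨j+1, hi⟩ = P.verts.get ⟨j-1, hjm⟩ :=
            φ.injective heq
          have := (P.nodup.get_inj_iff).1 heq2
          simp only [Fin.mk.injEq] at this
          omega
  -- length of the path: q = n - 1
  have hq : P.edges.length = n - 1 := by
    have hlast := tpath_get_last P (by omega)
    have := hb (P.verts.length - 1) (by omega)
    rw [hlast, hz] at this
    simp only [Fin.val_mk] at this
    omega
  -- the endpoints of e
  obtain ⟨x, y, hxy⟩ : ∃ x y, G.ends e = s(x, y) :=
    Sym2.exists.1 ⟨G.ends e, rfl⟩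
  have hadjxy : G.simple.Adj x y := ⟨e, hxy⟩
  have hadj2 : (SimpleGraph.pathGraph n).Adj (φ x) (φ y) := φ.map_adj_iff.2 hadjxy
  rw [SimpleGraph.pathGraph_adj] at hadj2
  -- wlog via two symmetric cases
  have main : ∀ x y : G.V, G.ends e = s(x, y) →
      ((φ x) : Fin n).val + 1 = ((φ y) : Fin n).val → e ∈ P.edges := by
    intro x y hxy hstep
    set k := ((φ x) : Fin n).val with hk
    have hky : ((φ y) : Fin n).val = k + 1 := by omega
    have hkq : k < P.edges.length := by
      have := (φ y).isLt
      omega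
    have hvk : P.verts.get ⟨k, by omega⟩ = x := by
      apply φ.injective
      apply Fin.ext
      rw [hb k (by omega)]
    have hvk1 : P.verts.get ⟨k+1, by omega⟩ = y := by
      apply φ.injective
      apply Fin.ext
      rw [hb (k+1) (by omega), hky]
    have hends := P.ends_eq k hkq
    rw [hvk, hvk1, ← hxy] at hends
    have := he _ hends
    rw [← this]
    exact List.get_mem _ _
  rcases hadj2 with h1 | h2
  · exact main x y hxy h1
  · exact main y x (by rw [hxy, Sym2.eq_swap]) h2

end Aux

/-- if the underlying simple graph of `G` is a path with endpoints `s` and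
`z` and some multiedge of `G` has multiplicity 1, then `maxD = minC` for every
timefunction. -/
theorem stmt15 (G : Multigraph) (s z : G.V)
    (hpath : ∃ (n : ℕ) (hn : 2 ≤ n) (φ : G.simple ≃g SimpleGraph.pathGraph n),
        φ s = ⟨0, by omega⟩ ∧ φ z = ⟨n - 1, by omega⟩)
    (hmult1 : ∃ e : G.E, ∀ f : G.E, G.ends f = G.ends e → f = e)
    (lam : G.E → ℕ) (hpos : ∀ e, 0 < lam e) :
    maxD G lam s z = minC G lam s z := by
  obtain ⟨n, hn, φ, hs, hz⟩ := hpath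
  obtain ⟨e, he⟩ := hmult1
  by_cases hP : Nonempty (TPath G lam s z)
  · obtain ⟨P⟩ := hP
    have hmem : ∀ Q : TPath G lam s z, lam e ∈ Q.times :=
      fun Q => ⟨e, key_mem hn φ hs hz e he Q, rfl⟩
    -- every element of the maxD set is ≤ 1
    have hub : ∀ k ∈ {k | ∃ f : Fin k → TPath G lam s z,
        ∀ i j, i ≠ j → SnapDisjoint (f i) (f j)}, k ≤ 1 := by
      rintro k ⟨f, hf⟩
      by_contra h
      push_neg at h
      have h01 : (⟨0, by omega⟩ : Fin k) ≠ ⟨1, by omega⟩ := by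
        simp [Fin.ext_iff]
      have hd := hf _ _ h01
      have : lam e ∈ (f ⟨0, by omega⟩).times ∩ (f ⟨1, by omega⟩).times :=
        ⟨hmem _, hmem _⟩
      rw [SnapDisjoint] at hd
      rw [hd] at this
      exact this
    have hone : 1 ∈ {k | ∃ f : Fin k → TPath G lam s z,
        ∀ i j, i ≠ j → SnapDisjoint (f i) (f j)} :=
      ⟨fun _ => P, fun i j hij => absurd (Subsingleton.elim i j) hij⟩
    have hD1 : maxD G lam s z = 1 := by
      unfold maxD
      exact le_antisymm (csSup_le ⟨1, hone⟩ hub) (le_csSup ⟨1, hub⟩ hone)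
    have hone' : 1 ∈ {h | ∃ S : Finset ℕ, S.card = h ∧ IsSnapCut G lam s z ↑S} := by
      refine ⟨{lam e}, Finset.card_singleton _, fun Q => ?_⟩
      exact ⟨e, key_mem hn φ hs hz e he Q, by simp⟩
    have hzero : 0 ∉ {h | ∃ S : Finset ℕ, S.card = h ∧ IsSnapCut G lam s z ↑S} := by
      rintro ⟨S, hcard, hcut⟩
      obtain ⟨f, hfmem, hfS⟩ := hcut P
      rw [Finset.card_eq_zero] at hcard
      subst hcard
      simpa using hfS
    have hC1 : minC G lam s z = 1 := by
      unfold minC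
      refine le_antisymm (Nat.sInf_le hone') ?_
      have := Nat.sInf_mem (⟨1, hone'⟩ : Set.Nonempty _)
      rcases Nat.eq_zero_or_pos (sInf {h | ∃ S : Finset ℕ, S.card = h ∧
          IsSnapCut G lam s z ↑S}) with h0 | h0
      · rw [h0] at this; exact absurd this hzero
      · exact h0
    rw [hD1, hC1]
  · have hD0 : maxD G lam s z = 0 := by
      unfold maxD
      have : {k | ∃ f : Fin k → TPath G lam s z,
          ∀ i j, i ≠ j → SnapDisjoint (f i) (f j)} = {0} := by
        ext k
        constructor
        · rintro ⟨f, -⟩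
          by_contra hk
          exact hP ⟨f ⟨0, Nat.pos_of_ne_zero hk⟩⟩
        · rintro rfl
          exact ⟨fun i => i.elim0, fun i j _ => i.elim0⟩
      rw [this, csSup_singleton]
    have hC0 : minC G lam s z = 0 := by
      unfold minC
      have h0 : 0 ∈ {h | ∃ S : Finset ℕ, S.card = h ∧ IsSnapCut G lam s z ↑S} :=
        ⟨∅, Finset.card_empty, fun Q => absurd ⟨Q⟩ hP⟩
      exact Nat.le_zero.1 (Nat.sInf_le h0)
    rw [hD0, hC0]
end

section
/- Let (G,λ) be a temporal graph with lifetime τ in which no two parallel edges are active at the same timestep, let s,z ∈ V(G) be distinct, and let k ≥ 1. Put F = E(G) ∪ {s,z} and extend λ by λ(s) = 0 and λ(z) = τ+1. Let M be the digraph on vertex set F with arcs: (s,f) for every f ∈ E(G) incident to s; (e,f) for every pair of distinct edges e,f ∈ E(G) sharing an endpoint and satisfying λ(e) ≤ λ(f); and (e,z) for every e ∈ E(G) incident to z. Let D be the digraph with V(D) = {(u₁,…,u_k) ∈ F^k : for all i ≠ j, λ(u_i) ≠ λ(u_j) or u_i = u_j ∈ {s,z}}, and with an arc from α = (u₁,…,u_k)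 to β if and only if β differs from α in exactly one coordinate i, λ(u_i) ≤ λ(u_j) for every j ∈ [k], and (u_i, β_i) is an arc of M, where β_i is the i-th coordinate of β. Then (G,λ) contains k pairwise snapshot disjoint temporal s,z-paths if and only if D contains a directed path from (s,…,s) to (z,…,z). -/
/-- The extension of the timefunction to `F = E(G) ∪ {s, z}`, where the `s`-marker
(`Sum.inr false`) gets time `0` and the `z`-marker (`Sum.inr true`) gets time `τ + 1`. -/
def lamF (G : Multigraph) (lam : G.E → ℕ) : G.E ⊕ Bool → ℕ
  | .inl e => lam e
  | .inr false => 0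
  | .inr true => Finset.univ.sup lam + 1

/-- The arcs of the auxiliary digraph `M` on `F = E(G) ∪ {s, z}`. -/
def MArc (G : Multigraph) (lam : G.E → ℕ) (s z : G.V) :
    G.E ⊕ Bool → G.E ⊕ Bool → Prop
  | .inr false, .inl f => s ∈ G.ends f
  | .inl e, .inl f => e ≠ f ∧ (∃ u, u ∈ G.ends e ∧ u ∈ G.ends f) ∧ lam e ≤ lam f
  | .inl e, .inr true => z ∈ G.ends e
  | _, _ => False

/-- Membership in the vertex set of the digraph `D`: a `k`-tuple over `F` all of whose
coordinates have distinct times, except for repeated `s`- or `z`-markers. -/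
def InVD (G : Multigraph) (lam : G.E → ℕ) {k : ℕ} (u : Fin k → G.E ⊕ Bool) : Prop :=
  ∀ i j, i ≠ j →
    lamF G lam (u i) ≠ lamF G lam (u j) ∨ (u i = u j ∧ ∃ b, u i = Sum.inr b)

/-- The arcs of the digraph `D` (between vertices of `D`): exactly one coordinate `i`
changes, coordinate `i` has minimum time, and the change is an arc of `M`. -/
def DArc (G : Multigraph) (lam : G.E → ℕ) (s z : G.V) {k : ℕ}
    (u w : Fin k → G.E ⊕ Bool) : Prop :=
  InVD G lam u ∧ InVD G lam w ∧
  ∃ i, (∀ j, j ≠ i → w j = u j) ∧ w i ≠ u i ∧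
    (∀ j, lamF G lam (u i) ≤ lamF G lam (u j)) ∧ MArc G lam s z (u i) (w i)

namespace TPath

variable {G : Multigraph} {lam : G.E → ℕ} {s v z : G.V}

lemma verts_len_pos (P : TPath G lam s v) : 0 < P.verts.length := by have := P.len_eq; omega

lemma verts_ne_nil (P : TPath G lam s v) : P.verts ≠ [] :=
  List.ne_nil_of_length_pos P.verts_len_pos

lemma verts_zero (P : TPath G lam s v) : P.verts[0]'P.verts_len_pos = s := by
  have h := P.head_eq
  rw [List.head?_eq_head P.verts_ne_nil] at h
  rw [List.getElem_zero]
  exact Option.some_injective _ h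

lemma verts_last (P : TPath G lam s v) :
    P.verts[P.verts.length - 1]'(by have := P.verts_len_pos; omega) = v := by
  have h := P.last_eq
  rw [List.getLast?_eq_getLast P.verts_ne_nil, List.getLast_eq_getElem] at h
  exact Option.some_injective _ h

lemma ends_eq' (P : TPath G lam s v) (i : ℕ) (h : i < P.edges.length) :
    G.ends (P.edges[i]) = s(P.verts[i]'(by have := P.len_eq; omega),
      P.verts[i+1]'(by have := P.len_eq; omega)) := by
  simpa [List.get_eq_getElem] using P.ends_eq i h

lemma mono' (P : TPath G lam s v) {i j : ℕ} (hij : i ≤ j) (hj : j < P.edges.length) :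
    lam (P.edges[i]'(by omega)) ≤ lam (P.edges[j]) := by
  rcases eq_or_lt_of_le hij with rfl | hlt
  · exact le_refl _
  · have := List.isChain_iff_pairwise.1 P.mono
    rw [List.pairwise_iff_getElem] at this
    have := this i j (by simpa using by omega) (by simpa using hj) hlt
    simpa using this

lemma consec_ne (P : TPath G lam s v) (i : ℕ) (h : i + 1 < P.edges.length) :
    P.edges[i]'(by omega) ≠ P.edges[i+1] := by
  intro he
  have h1 := P.ends_eq' i (by omega)
  have h2 := P.ends_eq' (i+1) h
  have hAB : s(P.verts[i]'(by have := P.len_eq; omega), P.verts[i+1]'(by have := P.len_eq; omega))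
      = s(P.verts[i+1]'(by have := P.len_eq; omega), P.verts[i+1+1]'(by have := P.len_eq; omega)) := by
    rw [← h1, he, h2]
  rw [Sym2.eq_iff] at hAB
  rcases hAB with ⟨ha, _⟩ | ⟨ha, hb⟩
  · have := (P.nodup.getElem_inj_iff).1 ha; omega
  · have := (P.nodup.getElem_inj_iff).1 ha; omega

lemma edges_len_pos (P : TPath G lam s z) (hsz : s ≠ z) : 0 < P.edges.length := by
  by_contra hlen
  have h0 : P.edges.length = 0 := by omega
  have h1 := P.verts_zero
  have h2 := P.verts_last
  have : P.verts.length - 1 = 0 := by rw [P.len_eq, h0]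
  rw [getElem_congr_idx this] at h2
  rw [h1] at h2
  exact hsz h2

def nil : TPath G lam s s where
  verts := [s]
  edges := []
  len_eq := rfl
  head_eq := rfl
  last_eq := rfl
  nodup := List.nodup_singleton s
  ends_eq := by intro i h; simp at h
  mono := List.IsChain.nil

@[simp] lemma nil_edges : (nil : TPath G lam s s).edges = [] := rfl

lemma exists_trunc (P : TPath G lam s v) {w : G.V} (hw : w ∈ P.verts) :
    ∃ Q : TPath G lam s w, ∀ x ∈ Q.edges, x ∈ P.edges := by
  obtain ⟨m, hm, hmw⟩ := List.mem_iff_getElem.1 hw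
  have hme : m ≤ P.edges.length := by have := P.len_eq; omega
  have hlv : (P.verts.take (m+1)).length = m + 1 := by
    rw [List.length_take]; omega
  have hle : (P.edges.take m).length = m := by
    rw [List.length_take]; omega
  have hne : P.verts.take (m+1) ≠ [] := by
    apply List.ne_nil_of_length_pos; omega
  refine ⟨⟨P.verts.take (m+1), P.edges.take m, by omega, ?_, ?_, ?_, ?_, ?_⟩, ?_⟩
  · rw [List.head?_take]; simp [P.head_eq]
  · rw [List.getLast?_eq_getLast hne, List.getLast_eq_getElem]
    congr 1
    have h1 : (P.verts.take (m+1)).length - 1 = m := by omega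
    rw [getElem_congr_idx h1, List.getElem_take]
    exact hmw
  · exact (List.take_sublist _ _).nodup P.nodup
  · intro i h
    rw [hle] at h
    have := P.ends_eq' i (by omega)
    simp only [List.get_eq_getElem, List.getElem_take]
    exact this
  · have : (P.edges.take m).map lam = (P.edges.map lam).take m := by
      rw [List.map_take]
    rw [this]
    exact P.mono.sublist (List.take_sublist _ _)
  · intro x hx
    exact (List.take_sublist _ _).mem hx

lemma exists_snoc (P : TPath G lam s v) {e : G.E} {w : G.V} (hend : G.ends e = s(v, w))
    (hw : w ∉ P.verts) (hb : ∀ x ∈ P.edges, lam x ≤ lam e) :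
    ∃ Q : TPath G lam s w, ∀ x ∈ Q.edges, x ∈ P.edges ∨ x = e := by
  have hlen := P.len_eq
  refine ⟨⟨P.verts ++ [w], P.edges ++ [e], by simp [hlen], ?_, ?_, ?_, ?_, ?_⟩, ?_⟩
  · have hne : P.verts ++ [w] ≠ [] := by simp
    rw [List.head?_eq_head hne, ← List.getElem_zero (by simp only [List.length_append]; omega)]
    rw [List.getElem_append]
    have h0 : 0 < P.verts.length := P.verts_len_pos
    rw [dif_pos h0]
    rw [P.verts_zero]
  · exact List.getLast?_concat
  · rw [List.nodup_append]
    exact ⟨P.nodup, List.nodup_singleton _, fun a ha b hb hab => hw (by simp at hb; subst hb; subst hab; exact ha)⟩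
  · intro i hi
    simp only [List.length_append, List.length_singleton] at hi
    simp only [List.get_eq_getElem, List.getElem_append]
    rcases lt_or_ge i P.edges.length with h' | h'
    · rw [dif_pos h', dif_pos (show i < P.verts.length by omega),
        dif_pos (show i + 1 < P.verts.length by omega)]
      exact P.ends_eq' i h'
    · have hie : i = P.edges.length := by omega
      subst hie
      rw [dif_pos (show P.edges.length < P.verts.length by omega)]
      have hv1 : P.verts[P.edges.length]'(by omega) = v := by
        rw [getElem_congr_idx (show P.edges.length = P.verts.length - 1 by omega)]
        exact P.verts_last
      rw [hv1]
      rw [dif_neg (lt_irrefl _), dif_neg (by omega)]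
      rw [getElem_congr_idx (show P.edges.length - P.edges.length = 0 by omega)]
      rw [getElem_congr_idx (show P.edges.length + 1 - P.verts.length = 0 by omega)]
      simpa using hend
  · rw [List.map_append]
    refine List.isChain_append.2 ?_
    refine ⟨P.mono, List.IsChain.singleton _, ?_⟩
    intro x hx y hy
    simp only [List.map_cons, List.map_nil, List.head?_cons, Option.mem_def,
      Option.some.injEq] at hy
    subst hy
    have hxm : x ∈ P.edges.map lam := List.mem_of_mem_getLast? hx
    obtain ⟨a, ha, rfl⟩ := List.mem_map.1 hxm
    exact hb a ha
  · intro x hx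
    simp only [List.mem_append, List.mem_singleton] at hx
    exact hx

/-- From a path ending at `v ∈ G.ends e`, reach the other endpoint `w` of `e`,
using edges of `P` together with possibly `e`. -/
lemma exists_step (P : TPath G lam s v) {e : G.E} {w : G.V} (hend : G.ends e = s(v, w))
    (hb : ∀ x ∈ P.edges, lam x ≤ lam e) :
    ∃ Q : TPath G lam s w, ∀ x ∈ Q.edges, x ∈ P.edges ∨ x = e := by
  by_cases hw : w ∈ P.verts
  · obtain ⟨Q, hQ⟩ := P.exists_trunc hw
    exact ⟨Q, fun x hx => Or.inl (hQ x hx)⟩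
  · exact P.exists_snoc hend hw hb

end TPath


section Forward

variable {G : Multigraph} {lam : G.E → ℕ} {s z : G.V} {k : ℕ}

lemma lamF_inl (e : G.E) : lamF G lam (.inl e) = lam e := rfl
lemma lamF_s : lamF G lam (.inr false) = 0 := rfl
lemma lamF_z : lamF G lam (.inr true) = Finset.univ.sup lam + 1 := rfl

lemma lam_le_tau (e : G.E) : lam e ≤ Finset.univ.sup lam :=
  Finset.le_sup (Finset.mem_univ e)

lemma lamF_le (x : G.E ⊕ Bool) : lamF G lam x ≤ Finset.univ.sup lam + 1 := by
  match x with
  | .inl e => have := lam_le_tau (lam := lam) e; rw [lamF_inl]; omega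
  | .inr false => rw [lamF_s]; omega
  | .inr true => rw [lamF_z]

lemma InVD_of_mem (hpos : ∀ e, 0 < lam e) (f : Fin k → TPath G lam s z)
    (hd : ∀ i j, i ≠ j → SnapDisjoint (f i) (f j))
    (u : Fin k → G.E ⊕ Bool)
    (hu : ∀ i e, u i = .inl e → e ∈ (f i).edges) : InVD G lam u := by
  intro i j hij
  match hui : u i, huj : u j with
  | .inr b, .inr c =>
    by_cases hbc : b = c
    · exact Or.inr ⟨by rw [hbc], b, rfl⟩
    · left
      match b, c with
      | false, false => exact absurd rfl hbc
      | true, true => exact absurd rfl hbc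
      | false, true => rw [lamF_s, lamF_z]; omega
      | true, false => rw [lamF_s, lamF_z]; omega
  | .inr b, .inl e =>
    left
    match b with
    | false => rw [lamF_s, lamF_inl]; exact (hpos e).ne
    | true => rw [lamF_z, lamF_inl]; have := lam_le_tau (lam := lam) e; omega
  | .inl e, .inr b =>
    left
    match b with
    | false => rw [lamF_s, lamF_inl]; exact (hpos e).ne'
    | true => rw [lamF_z, lamF_inl]; have := lam_le_tau (lam := lam) e; omega
  | .inl e, .inl e' =>
    left
    rw [lamF_inl, lamF_inl]
    intro hEq
    have hdisj := hd i j hij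
    rw [SnapDisjoint, Set.eq_empty_iff_forall_notMem] at hdisj
    exact hdisj (lam e) ⟨⟨e, hu i e hui, rfl⟩, ⟨e', hu j e' huj, hEq.symm⟩⟩

/-- The state of the forward simulation: pointer `p i` into path `i`. -/
def fwdVal (f : Fin k → TPath G lam s z) (p : Fin k → ℕ) (i : Fin k) : G.E ⊕ Bool :=
  if h1 : p i = 0 then .inr false
  else if h2 : p i ≤ (f i).edges.length then .inl ((f i).edges[p i - 1]'(by omega))
  else .inr true

lemma fwdVal_mem (f : Fin k → TPath G lam s z) (p : Fin k → ℕ) :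
    ∀ i e, fwdVal f p i = .inl e → e ∈ (f i).edges := by
  intro i e h
  rw [fwdVal] at h
  split_ifs at h with h1 h2
  all_goals first
    | (exfalso; exact Sum.noConfusion h)
    | (injection h with h'; exact h' ▸ List.getElem_mem _)

lemma fwd_invd (hpos : ∀ e, 0 < lam e) (f : Fin k → TPath G lam s z)
    (hd : ∀ i j, i ≠ j → SnapDisjoint (f i) (f j)) (p : Fin k → ℕ) :
    InVD G lam (fwdVal f p) :=
  InVD_of_mem hpos f hd _ (fwdVal_mem f p)

lemma fwd_step (hpos : ∀ e, 0 < lam e) (hsz : s ≠ z) (f : Fin k → TPath G lam s z)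
    (hd : ∀ i j, i ≠ j → SnapDisjoint (f i) (f j)) (p : Fin k → ℕ) (i0 : Fin k)
    (h0 : p i0 ≤ (f i0).edges.length)
    (hmin : ∀ j, p j ≤ (f j).edges.length →
      lamF G lam (fwdVal f p i0) ≤ lamF G lam (fwdVal f p j)) :
    DArc G lam s z (fwdVal f p) (fwdVal f (Function.update p i0 (p i0 + 1))) := by
  have hq1 : 0 < (f i0).edges.length := (f i0).edges_len_pos hsz
  set p' := Function.update p i0 (p i0 + 1) with hp'def
  have hp'i : p' i0 = p i0 + 1 := Function.update_self _ _ _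
  have hmin' : ∀ j, lamF G lam (fwdVal f p i0) ≤ lamF G lam (fwdVal f p j) := by
    intro j
    by_cases hj : p j ≤ (f j).edges.length
    · exact hmin j hj
    · have hvj : fwdVal f p j = .inr true := by
        rw [fwdVal, dif_neg (by omega), dif_neg hj]
      rw [hvj, lamF_z]
      exact lamF_le _
  have hframe : ∀ j, j ≠ i0 → fwdVal f p' j = fwdVal f p j := by
    intro j hj
    have hupd : p' j = p j := Function.update_of_ne hj _ _
    simp only [fwdVal, hupd]
  rcases Nat.eq_zero_or_pos (p i0) with hp0 | hp0
  · have hold : fwdVal f p i0 = .inr false := by rw [fwdVal, dif_pos hp0]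
    have hnew : fwdVal f p' i0 = .inl ((f i0).edges[0]'hq1) := by
      rw [fwdVal, dif_neg (by omega), dif_pos (by omega)]
      congr 1
      exact getElem_congr_idx (by omega)
    refine ⟨fwd_invd hpos f hd p, fwd_invd hpos f hd p', i0, hframe, ?_, hmin', ?_⟩
    · rw [hold, hnew]; simp
    · rw [hold, hnew]
      show s ∈ G.ends ((f i0).edges[0]'hq1)
      rw [(f i0).ends_eq' 0 hq1, Sym2.mem_iff]
      left
      exact ((f i0).verts_zero).symm
  · have hold : fwdVal f p i0 = .inl ((f i0).edges[p i0 - 1]'(by omega)) := by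
      rw [fwdVal, dif_neg (by omega), dif_pos h0]
    by_cases hlast : p i0 + 1 ≤ (f i0).edges.length
    · have hnew : fwdVal f p' i0 = .inl ((f i0).edges[p i0]'(by omega)) := by
        rw [fwdVal, dif_neg (by omega), dif_pos (by omega)]
        congr 1
        exact getElem_congr_idx (by omega)
      have hne : (f i0).edges[p i0 - 1]'(by omega) ≠ (f i0).edges[p i0]'(by omega) := by
        have hcne := (f i0).consec_ne (p i0 - 1) (by omega)
        rw [getElem_congr_idx (show p i0 - 1 + 1 = p i0 by omega)] at hcne
        exact hcne
      refine ⟨fwd_invd hpos f hd p, fwd_invd hpos f hd p', i0, hframe, ?_, hmin', ?_⟩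
      · rw [hold, hnew]
        simp only [ne_eq, Sum.inl.injEq]
        exact fun h => hne h.symm
      · rw [hold, hnew]
        show (f i0).edges[p i0 - 1]'(by omega) ≠ (f i0).edges[p i0]'(by omega) ∧
          (∃ u, u ∈ G.ends ((f i0).edges[p i0 - 1]'(by omega)) ∧
            u ∈ G.ends ((f i0).edges[p i0]'(by omega))) ∧
          lam ((f i0).edges[p i0 - 1]'(by omega)) ≤ lam ((f i0).edges[p i0]'(by omega))
        refine ⟨hne, ⟨(f i0).verts[p i0]'(by have := (f i0).len_eq; omega), ?_, ?_⟩, ?_⟩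
        · rw [(f i0).ends_eq' (p i0 - 1) (by omega), Sym2.mem_iff]
          right
          rw [getElem_congr_idx (show p i0 - 1 + 1 = p i0 by omega)]
        · rw [(f i0).ends_eq' (p i0) (by omega), Sym2.mem_iff]
          left; rfl
        · exact (f i0).mono' (show p i0 - 1 ≤ p i0 by omega) (by omega)
    · have hnew : fwdVal f p' i0 = .inr true := by
        rw [fwdVal, dif_neg (by omega), dif_neg (by omega)]
      refine ⟨fwd_invd hpos f hd p, fwd_invd hpos f hd p', i0, hframe, ?_, hmin', ?_⟩
      · rw [hold, hnew]; simp
      · rw [hold, hnew]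
        show z ∈ G.ends ((f i0).edges[p i0 - 1]'(by omega))
        rw [(f i0).ends_eq' (p i0 - 1) (by omega), Sym2.mem_iff]
        right
        rw [getElem_congr_idx (show p i0 - 1 + 1 = (f i0).verts.length - 1 by
          have := (f i0).len_eq; omega)]
        exact ((f i0).verts_last).symm

lemma fwd_reach (hpos : ∀ e, 0 < lam e) (hsz : s ≠ z) (f : Fin k → TPath G lam s z)
    (hd : ∀ i j, i ≠ j → SnapDisjoint (f i) (f j)) :
    ∀ (N : ℕ) (p : Fin k → ℕ), (∑ j, ((f j).edges.length + 1 - p j)) ≤ N →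
    Relation.ReflTransGen (DArc G lam s z) (fwdVal f p) (fun _ => .inr true) := by
  intro N
  induction N with
  | zero =>
    intro p hp
    have hall : ∀ j, (f j).edges.length + 1 ≤ p j := by
      intro j
      by_contra hj
      have h1 : 1 ≤ (f j).edges.length + 1 - p j := by omega
      have h2 : ∑ j, ((f j).edges.length + 1 - p j) ≥ 1 := by
        calc 1 ≤ (f j).edges.length + 1 - p j := h1
        _ ≤ _ := Finset.single_le_sum (f := fun j => (f j).edges.length + 1 - p j)
            (fun _ _ => Nat.zero_le _) (Finset.mem_univ j)
      omega
    have : fwdVal f p = fun _ => .inr true := by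
      funext j
      rw [fwdVal, dif_neg (by have := hall j; omega), dif_neg (by have := hall j; omega)]
    rw [this]
  | succ N ih =>
    intro p hp
    by_cases hall : ∀ j, (f j).edges.length + 1 ≤ p j
    · have : fwdVal f p = fun _ => .inr true := by
        funext j
        rw [fwdVal, dif_neg (by have := hall j; omega), dif_neg (by have := hall j; omega)]
      rw [this]
    · push_neg at hall
      obtain ⟨j0, hj0⟩ := hall
      have hS : (Finset.univ.filter (fun j => p j ≤ (f j).edges.length)).Nonempty :=
        ⟨j0, Finset.mem_filter.2 ⟨Finset.mem_univ _, by omega⟩⟩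
      obtain ⟨i0, hi0S, hi0min⟩ := Finset.exists_min_image _ (fun j => lamF G lam (fwdVal f p j)) hS
      have h0 : p i0 ≤ (f i0).edges.length := (Finset.mem_filter.1 hi0S).2
      have hstep := fwd_step hpos hsz f hd p i0 h0 (fun j hj =>
        hi0min j (Finset.mem_filter.2 ⟨Finset.mem_univ _, hj⟩))
      refine Relation.ReflTransGen.head hstep (ih _ ?_)
      have hsum : ∑ j, ((f j).edges.length + 1 - Function.update p i0 (p i0 + 1) j)
          + 1 ≤ ∑ j, ((f j).edges.length + 1 - p j) := by
        rw [← Finset.sum_erase_add _ _ (Finset.mem_univ i0),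
          ← Finset.sum_erase_add _ (fun j => (f j).edges.length + 1 - p j) (Finset.mem_univ i0)]
        have h1 : ∑ j ∈ Finset.univ.erase i0, ((f j).edges.length + 1 - Function.update p i0 (p i0 + 1) j)
            = ∑ j ∈ Finset.univ.erase i0, ((f j).edges.length + 1 - p j) := by
          apply Finset.sum_congr rfl
          intro j hj
          rw [Function.update_of_ne (Finset.ne_of_mem_erase hj)]
        rw [h1, Function.update_self]
        omega
      omega

lemma forward_dir (hpos : ∀ e, 0 < lam e) (hsz : s ≠ z) (f : Fin k → TPath G lam s z)
    (hd : ∀ i j, i ≠ j → SnapDisjoint (f i) (f j)) :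
    Relation.ReflTransGen (DArc G lam s z (k := k))
      (fun _ => Sum.inr false) (fun _ => Sum.inr true) := by
  have h0 : (fun _ => Sum.inr false : Fin k → G.E ⊕ Bool) = fwdVal f (fun _ => 0) := by
    funext j; rw [fwdVal]; simp
  rw [h0]
  exact fwd_reach hpos hsz f hd _ _ le_rfl

end Forward





section Backward

variable {G : Multigraph} {lam : G.E → ℕ} {s z : G.V} {k : ℕ}

lemma MArc_cases {x y : G.E ⊕ Bool} (h : MArc G lam s z x y) :
    (x = .inr false ∧ ∃ f, y = .inl f ∧ s ∈ G.ends f) ∨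
    (∃ e f, x = .inl e ∧ y = .inl f ∧ e ≠ f ∧
      (∃ v, v ∈ G.ends e ∧ v ∈ G.ends f) ∧ lam e ≤ lam f) ∨
    (∃ e, x = .inl e ∧ y = .inr true ∧ z ∈ G.ends e) := by
  match x, y with
  | .inr false, .inl f => exact Or.inl ⟨rfl, f, rfl, h⟩
  | .inl e, .inl f => exact Or.inr (Or.inl ⟨e, f, rfl, rfl, h.1, h.2.1, h.2.2⟩)
  | .inl e, .inr true => exact Or.inr (Or.inr ⟨e, rfl, rfl, h⟩)
  | .inr false, .inr false => exact (h : False).elim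
  | .inr false, .inr true => exact (h : False).elim
  | .inr true, .inl f => exact (h : False).elim
  | .inr true, .inr false => exact (h : False).elim
  | .inr true, .inr true => exact (h : False).elim
  | .inl e, .inr false => exact (h : False).elim

/-- The invariant carried along a directed path in `D`. -/
structure DInv (G : Multigraph) (lam : G.E → ℕ) (s z : G.V) {k : ℕ}
    (u : Fin k → G.E ⊕ Bool) (T : Fin k → Finset ℕ) : Prop where
  disj : ∀ i j, i ≠ j → ∀ t, t ∈ T i → t ∉ T j
  cur : ∀ j e, u j = .inl e → lam e ∈ T j ∧ ∀ t ∈ T j, t ≤ lam e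
  start : ∀ j, u j = .inr false → T j = ∅
  rng : ∀ j t, t ∈ T j → 1 ≤ t ∧ t ≤ Finset.univ.sup lam
  fresh : (∃ j', u j' = .inr false) → ∀ j t, t ∈ T j → ∃ e, u j = .inl e ∧ lam e = t
  past : ∀ j t, t ∈ T j → ∀ j', t ≤ lamF G lam (u j') ∨ u j' = .inr false ∨
    ∃ g, u j = .inl g ∧ lam g = t
  pdE : ∀ j e, u j = .inl e → ∃ v, v ∈ G.ends e ∧ ∃ P : TPath G lam s v,
    ∀ x ∈ P.edges, lam x ∈ T j ∧ lam x ≤ lam e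
  pdZ : ∀ j, u j = .inr true → ∃ P : TPath G lam s z, ∀ x ∈ P.edges, lam x ∈ T j

lemma dinv_init :
    DInv G lam s z (fun _ : Fin k => (.inr false : G.E ⊕ Bool)) (fun _ => ∅) := by
  refine ⟨?_, ?_, ?_, ?_, ?_, ?_, ?_, ?_⟩
  · intro i j _ t ht; simp at ht
  · intro j e h; exact absurd h (by simp)
  · intro j _; rfl
  · intro j t ht; simp at ht
  · intro _ j t ht; simp at ht
  · intro j t ht; simp at ht
  · intro j e h; exact absurd h (by simp)
  · intro j h; exact absurd h (by simp)

lemma dinv_step (hpos : ∀ e, 0 < lam e) {u w : Fin k → G.E ⊕ Bool} {T : Fin k → Finset ℕ}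
    (hI : DInv G lam s z u T) (hA : DArc G lam s z u w) :
    ∃ T', DInv G lam s z w T' := by
  obtain ⟨hVu, hVw, i, hfr, hne, hmin, hM⟩ := hA
  rcases MArc_cases hM with ⟨hui, f, hwi, hsf⟩ |
      ⟨e, f, hui, hwi, hef, ⟨x, hxe, hxf⟩, hlef⟩ | ⟨e, hui, hwi, hze⟩
  · -- Case 1 : s → first edge f
    have hTi : T i = ∅ := hI.start i hui
    have hfresh := hI.fresh ⟨i, hui⟩
    have hfree : ∀ j, j ≠ i → lam f ∉ T j := by
      intro j hj hmem
      obtain ⟨g, hg, hgf⟩ := hfresh j _ hmem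
      have hwj : w j = .inl g := by rw [hfr j hj, hg]
      rcases hVw i j (Ne.symm hj) with hne' | ⟨_, b, hb⟩
      · exact hne' (by rw [hwi, hwj, lamF_inl, lamF_inl, hgf])
      · rw [hwi] at hb; exact absurd hb (by simp)
    refine ⟨Function.update T i {lam f}, ?_, ?_, ?_, ?_, ?_, ?_, ?_, ?_⟩
    · intro a b hab t hta htb
      by_cases ha : a = i
      · subst ha
        rw [Function.update_self] at hta
        rw [Function.update_of_ne (Ne.symm hab)] at htb
        rw [Finset.mem_singleton] at hta
        exact hfree b (Ne.symm hab) (hta ▸ htb)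
      · rw [Function.update_of_ne ha] at hta
        by_cases hb : b = i
        · subst hb
          rw [Function.update_self, Finset.mem_singleton] at htb
          exact hfree a ha (htb ▸ hta)
        · rw [Function.update_of_ne hb] at htb
          exact hI.disj a b hab t hta htb
    · intro j e' hj
      by_cases hij : j = i
      · subst hij
        rw [hwi] at hj
        obtain rfl : f = e' := Sum.inl.inj hj
        rw [Function.update_self]
        exact ⟨Finset.mem_singleton_self _, fun t ht => le_of_eq (Finset.mem_singleton.1 ht)⟩
      · rw [Function.update_of_ne hij]
        exact hI.cur j e' (by rw [← hfr j hij]; exact hj)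
    · intro j hj
      by_cases hij : j = i
      · subst hij; rw [hwi] at hj; exact absurd hj (by simp)
      · rw [Function.update_of_ne hij]
        exact hI.start j (by rw [← hfr j hij]; exact hj)
    · intro j t ht
      by_cases hij : j = i
      · subst hij
        rw [Function.update_self, Finset.mem_singleton] at ht
        subst ht
        exact ⟨hpos f, lam_le_tau f⟩
      · rw [Function.update_of_ne hij] at ht
        exact hI.rng j t ht
    · rintro ⟨j', hj'⟩ j t ht
      by_cases hij : j = i
      · subst hij
        rw [Function.update_self, Finset.mem_singleton] at ht
        exact ⟨f, hwi, ht.symm⟩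
      · rw [Function.update_of_ne hij] at ht
        obtain ⟨g, hg, hgt⟩ := hfresh j t ht
        exact ⟨g, by rw [hfr j hij]; exact hg, hgt⟩
    · intro j t ht j'
      by_cases hij : j = i
      · subst hij
        rw [Function.update_self, Finset.mem_singleton] at ht
        exact Or.inr (Or.inr ⟨f, hwi, ht.symm⟩)
      · rw [Function.update_of_ne hij] at ht
        obtain ⟨g, hg, hgt⟩ := hfresh j t ht
        exact Or.inr (Or.inr ⟨g, by rw [hfr j hij]; exact hg, hgt⟩)
    · intro j e' hj
      by_cases hij : j = i
      · subst hij
        rw [hwi] at hj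
        obtain rfl : f = e' := Sum.inl.inj hj
        refine ⟨s, hsf, TPath.nil, ?_⟩
        intro x hx
        simp at hx
      · rw [Function.update_of_ne hij]
        exact hI.pdE j e' (by rw [← hfr j hij]; exact hj)
    · intro j hj
      by_cases hij : j = i
      · subst hij; rw [hwi] at hj; exact absurd hj (by simp)
      · rw [Function.update_of_ne hij]
        exact hI.pdZ j (by rw [← hfr j hij]; exact hj)
  · -- Case 2 : edge e → edge f
    have hnos : ∀ j', u j' ≠ .inr false := by
      intro j' h'
      have := hmin j'
      rw [h', hui] at this
      exact absurd (this.trans_lt (hpos e)).false (by simp)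
    have hcuri := hI.cur i e hui
    have hminlam : ∀ j', lam e ≤ lamF G lam (u j') := by
      intro j'
      have := hmin j'
      rwa [hui] at this
    have hfree : ∀ j, j ≠ i → lam f ∉ T j := by
      intro j hj hmem
      rcases hI.past j (lam f) hmem i with hle | hs | ⟨g, hg, hgf⟩
      · rw [hui, lamF_inl] at hle
        have hEq : lam e = lam f := le_antisymm hlef hle
        exact hI.disj i j (Ne.symm hj) (lam e) hcuri.1 (hEq ▸ hmem)
      · exact hnos i hs
      · have hwj : w j = .inl g := by rw [hfr j hj, hg]
        rcases hVw i j (Ne.symm hj) with hne' | ⟨_, b, hb⟩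
        · exact hne' (by rw [hwi, hwj, lamF_inl, lamF_inl, hgf])
        · rw [hwi] at hb; exact absurd hb (by simp)
    refine ⟨Function.update T i (insert (lam f) (T i)), ?_, ?_, ?_, ?_, ?_, ?_, ?_, ?_⟩
    · intro a b hab t hta htb
      by_cases ha : a = i
      · subst ha
        rw [Function.update_self, Finset.mem_insert] at hta
        rw [Function.update_of_ne (Ne.symm hab)] at htb
        rcases hta with rfl | hta
        · exact hfree b (Ne.symm hab) htb
        · exact hI.disj a b hab t hta htb
      · rw [Function.update_of_ne ha] at hta
        by_cases hb : b = i
        · subst hb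
          rw [Function.update_self, Finset.mem_insert] at htb
          rcases htb with rfl | htb
          · exact hfree a ha hta
          · exact hI.disj a b hab t hta htb
        · rw [Function.update_of_ne hb] at htb
          exact hI.disj a b hab t hta htb
    · intro j e' hj
      by_cases hij : j = i
      · subst hij
        rw [hwi] at hj
        obtain rfl : f = e' := Sum.inl.inj hj
        rw [Function.update_self]
        refine ⟨Finset.mem_insert_self _ _, ?_⟩
        intro t ht
        rcases Finset.mem_insert.1 ht with rfl | ht
        · exact le_rfl
        · exact (hcuri.2 t ht).trans hlef
      · rw [Function.update_of_ne hij]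
        exact hI.cur j e' (by rw [← hfr j hij]; exact hj)
    · intro j hj
      by_cases hij : j = i
      · subst hij; rw [hwi] at hj; exact absurd hj (by simp)
      · exact absurd (by rw [← hfr j hij]; exact hj) (hnos j)
    · intro j t ht
      by_cases hij : j = i
      · subst hij
        rw [Function.update_self] at ht
        rcases Finset.mem_insert.1 ht with rfl | ht
        · exact ⟨hpos f, lam_le_tau f⟩
        · exact hI.rng j t ht
      · rw [Function.update_of_ne hij] at ht
        exact hI.rng j t ht
    · rintro ⟨j', hj'⟩
      by_cases hij : j' = i
      · subst hij; rw [hwi] at hj'; exact absurd hj' (by simp)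
      · exact absurd (by rw [← hfr j' hij]; exact hj') (hnos j')
    · intro j t ht j'
      by_cases hij : j = i
      · subst hij
        rw [Function.update_self] at ht
        rcases Finset.mem_insert.1 ht with rfl | ht
        · exact Or.inr (Or.inr ⟨f, hwi, rfl⟩)
        · left
          have h1 : t ≤ lam e := hcuri.2 t ht
          by_cases hji : j' = j
          · subst hji
            rw [hwi, lamF_inl]
            exact h1.trans hlef
          · rw [hfr j' hji]
            exact h1.trans (hminlam j')
      · rw [Function.update_of_ne hij] at ht
        rcases hI.past j t ht j' with hle | hs | ⟨g, hg, hgt⟩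
        · left
          by_cases hji : j' = i
          · subst hji
            rw [hui, lamF_inl] at hle
            rw [hwi, lamF_inl]
            exact hle.trans hlef
          · rw [hfr j' hji]
            exact hle
        · exact absurd hs (hnos j')
        · exact Or.inr (Or.inr ⟨g, by rw [hfr j hij]; exact hg, hgt⟩)
    · intro j e' hj
      by_cases hij : j = i
      · subst hij
        rw [hwi] at hj
        obtain rfl : f = e' := Sum.inl.inj hj
        obtain ⟨v, hv, P, hP⟩ := hI.pdE j e hui
        rw [Function.update_self]
        by_cases hvf : v ∈ G.ends f
        · exact ⟨v, hvf, P, fun y hy =>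
            ⟨Finset.mem_insert_of_mem (hP y hy).1, (hP y hy).2.trans hlef⟩⟩
        · have hend : G.ends e = s(v, Sym2.Mem.other hv) := (Sym2.other_spec hv).symm
          have hxvw : x = v ∨ x = Sym2.Mem.other hv := by
            rw [hend] at hxe; exact Sym2.mem_iff.1 hxe
          have hwvf : Sym2.Mem.other hv ∈ G.ends f := by
            rcases hxvw with rfl | rfl
            · exact absurd hxf hvf
            · exact hxf
          obtain ⟨Q, hQ⟩ := P.exists_step hend (fun y hy => (hP y hy).2)
          refine ⟨Sym2.Mem.other hv, hwvf, Q, fun y hy => ?_⟩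
          rcases hQ y hy with hyP | rfl
          · exact ⟨Finset.mem_insert_of_mem (hP y hyP).1, (hP y hyP).2.trans hlef⟩
          · exact ⟨Finset.mem_insert_of_mem hcuri.1, hlef⟩
      · rw [Function.update_of_ne hij]
        exact hI.pdE j e' (by rw [← hfr j hij]; exact hj)
    · intro j hj
      by_cases hij : j = i
      · subst hij; rw [hwi] at hj; exact absurd hj (by simp)
      · rw [Function.update_of_ne hij]
        exact hI.pdZ j (by rw [← hfr j hij]; exact hj)
  · -- Case 3 : edge e → z
    have hnos : ∀ j', u j' ≠ .inr false := by
      intro j' h'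
      have := hmin j'
      rw [h', hui] at this
      exact absurd (this.trans_lt (hpos e)).false (by simp)
    have hcuri := hI.cur i e hui
    have hminlam : ∀ j', lam e ≤ lamF G lam (u j') := by
      intro j'
      have := hmin j'
      rwa [hui] at this
    refine ⟨T, ?_, ?_, ?_, ?_, ?_, ?_, ?_, ?_⟩
    · exact hI.disj
    · intro j e' hj
      by_cases hij : j = i
      · subst hij; rw [hwi] at hj; exact absurd hj (by simp)
      · exact hI.cur j e' (by rw [← hfr j hij]; exact hj)
    · intro j hj
      by_cases hij : j = i
      · subst hij; rw [hwi] at hj; exact absurd hj (by simp)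
      · exact absurd (by rw [← hfr j hij]; exact hj) (hnos j)
    · exact hI.rng
    · rintro ⟨j', hj'⟩
      by_cases hij : j' = i
      · subst hij; rw [hwi] at hj'; exact absurd hj' (by simp)
      · exact absurd (by rw [← hfr j' hij]; exact hj') (hnos j')
    · intro j t ht j'
      rcases hI.past j t ht j' with hle | hs | ⟨g, hg, hgt⟩
      · left
        by_cases hji : j' = i
        · subst hji
          rw [hwi, lamF_z]
          have := (hI.rng j t ht).2
          omega
        · rw [hfr j' hji]
          exact hle
      · exact absurd hs (hnos j')
      · by_cases hij : j = i
        · subst hij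
          rw [hui] at hg
          obtain rfl : e = g := Sum.inl.inj hg
          left
          by_cases hji : j' = j
          · subst hji
            rw [hwi, lamF_z]
            have := (hI.rng j' t ht).2
            omega
          · rw [hfr j' hji, ← hgt]
            exact hminlam j'
        · exact Or.inr (Or.inr ⟨g, by rw [hfr j hij]; exact hg, hgt⟩)
    · intro j e' hj
      by_cases hij : j = i
      · subst hij; rw [hwi] at hj; exact absurd hj (by simp)
      · exact hI.pdE j e' (by rw [← hfr j hij]; exact hj)
    · intro j hj
      by_cases hij : j = i
      · subst hij
        obtain ⟨v, hv, P, hP⟩ := hI.pdE j e hui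
        by_cases hvz : v = z
        · subst hvz
          exact ⟨P, fun y hy => (hP y hy).1⟩
        · have hend : G.ends e = s(v, Sym2.Mem.other hv) := (Sym2.other_spec hv).symm
          have hz2 : z = Sym2.Mem.other hv := by
            have := Sym2.mem_iff.1 (hend ▸ hze)
            rcases this with h' | h'
            · exact absurd h'.symm hvz
            · exact h'
          have hend2 : G.ends e = s(v, z) := by rw [hend, hz2]
          obtain ⟨Q, hQ⟩ := P.exists_step hend2 (fun y hy => (hP y hy).2)
          refine ⟨Q, fun y hy => ?_⟩
          rcases hQ y hy with hyP | rfl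
          · exact (hP y hyP).1
          · exact hcuri.1
      · exact hI.pdZ j (by rw [← hfr j hij]; exact hj)

end Backward



lemma bwd_inv {G : Multigraph} {lam : G.E → ℕ} {s z : G.V} {k : ℕ}
    (hpos : ∀ e, 0 < lam e) (u : Fin k → G.E ⊕ Bool)
    (h : Relation.ReflTransGen (DArc G lam s z) (fun _ => .inr false) u) :
    ∃ T, DInv G lam s z u T := by
  induction h with
  | refl => exact ⟨fun _ => ∅, dinv_init⟩
  | tail _ h2 ih =>
    obtain ⟨T, hT⟩ := ih
    exact dinv_step hpos hT h2

/-- `(G,λ)` contains `k` pairwise snapshot disjoint temporal `s,z`-paths iff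
the digraph `D` contains a directed path from `s* = (s,…,s)` to `z* = (z,…,z)`. -/
theorem stmt16 (G : Multigraph) (lam : G.E → ℕ) (hpos : ∀ e, 0 < lam e)
    (hproper : ∀ e f, e ≠ f → G.ends e = G.ends f → lam e ≠ lam f)
    (s z : G.V) (hsz : s ≠ z) (k : ℕ) (hk : 1 ≤ k) :
    (∃ f : Fin k → TPath G lam s z, ∀ i j, i ≠ j → SnapDisjoint (f i) (f j)) ↔
      Relation.ReflTransGen (DArc G lam s z (k := k))
        (fun _ => Sum.inr false) (fun _ => Sum.inr true) := by
  constructor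
  · rintro ⟨f, hd⟩
    exact forward_dir hpos hsz f hd
  · intro h
    obtain ⟨T, hT⟩ := bwd_inv hpos _ h
    choose P hP using fun j : Fin k => hT.pdZ j rfl
    refine ⟨P, ?_⟩
    intro i j hij
    rw [SnapDisjoint, Set.eq_empty_iff_forall_notMem]
    rintro t ⟨h1, h2⟩
    obtain ⟨a, ha, rfl⟩ := h1
    obtain ⟨b, hb, hba⟩ := h2
    exact hT.disj i j hij (lam a) (hP i a ha) (hba ▸ hP j b hb)
end

section
/- Let G be a simple graph without isolated vertices whose edges are enumerated e₁,…,e_m, and let (G′,λ) be the temporal graph constructed as follows: G′ has two special vertices s and z and, for each u ∈ V(G), an s,z-path Q_u with exactly deg(u) edges, where the paths Q_u are pairwise internally vertex disjoint; λ assigns to the edges of Q_u, in order from s to z, the increasing sequence of indices i such that e_i is incident to u (so each Q_u is a temporal s,z-path with λ(E(Q_u)) = {i : e_i is incident to u}). Then G has an independent set of size at least k if and only if (G′,λ) has at least k pairwise snapshot disjoint temporal s,z-paths. -/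
namespace TPath
variable {G' : Multigraph} {lam : G'.E → ℕ} {s z : G'.V}

lemma vert_zero (P : TPath G' lam s z) :
    P.verts[0]'(by rw [P.len_eq]; omega) = s := by
  have h := P.head_eq
  have h0 : P.verts[0]? = some s := by
    cases hv : P.verts with
    | nil => rw [hv] at h; simp at h
    | cons v l => rw [hv] at h; simp at h; simp [hv, h]
  rw [List.getElem?_eq_getElem (by rw [P.len_eq]; omega)] at h0
  simpa using h0

lemma vert_last (P : TPath G' lam s z) :
    P.verts[P.edges.length]'(by rw [P.len_eq]; omega) = z := by
  have h := P.last_eq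
  rw [List.getLast?_eq_getElem?] at h
  have hl : P.verts.length - 1 = P.edges.length := by rw [P.len_eq]; omega
  rw [hl, List.getElem?_eq_getElem (by rw [P.len_eq]; omega)] at h
  simpa using h

lemma ends_getElem (P : TPath G' lam s z) (i : ℕ) (h : i < P.edges.length) :
    G'.ends (P.edges[i]) = s(P.verts[i]'(by rw [P.len_eq]; omega),
                            P.verts[i+1]'(by rw [P.len_eq]; omega)) := by
  simpa [List.get_eq_getElem] using P.ends_eq i h

lemma edges_eq_of_subset (P R : TPath G' lam s z)
    (hsub : ∀ e ∈ P.edges, e ∈ R.edges) : P.edges = R.edges := by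
  have hPv : P.verts.length = P.edges.length + 1 := P.len_eq
  have hRv : R.verts.length = R.edges.length + 1 := R.len_eq
  have key : ∀ a (_ha : a ≤ P.edges.length), ∃ _h : a ≤ R.edges.length, ∀ i (_hi : i ≤ a),
      P.verts[i]'(by omega) = R.verts[i]'(by omega) := by
    intro a
    induction a with
    | zero =>
      intro _
      refine ⟨Nat.zero_le _, ?_⟩
      intro i hi
      interval_cases i
      rw [P.vert_zero, R.vert_zero]
    | succ a ih =>
      intro ha
      obtain ⟨haL, hv⟩ := ih (by omega)
      have hta : P.edges[a] ∈ R.edges := hsub _ (List.getElem_mem _)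
      obtain ⟨b, hb, hbe⟩ := List.mem_iff_getElem.mp hta
      have h2 := R.ends_getElem b hb
      rw [hbe, P.ends_getElem a (by omega)] at h2
      rcases Sym2.eq_iff.mp h2 with ⟨h3, h4⟩ | ⟨h3, h4⟩
      · have h' : R.verts[a]'(by omega) = R.verts[b]'(by omega) := by
          rw [← hv a le_rfl, h3]
        have hab : a = b := R.nodup.getElem_inj_iff.mp h'
        subst hab
        refine ⟨by omega, ?_⟩
        intro i hi
        rcases Nat.lt_or_ge i (a+1) with h | h
        · exact hv i (by omega)
        · have hieq : i = a + 1 := by omega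
          subst hieq; exact h4
      · exfalso
        have h' : R.verts[a]'(by omega) = R.verts[b+1]'(by omega) := by
          rw [← hv a le_rfl, h3]
        have hab : a = b + 1 := R.nodup.getElem_inj_iff.mp h'
        have hb' : b = a - 1 := by omega
        subst hb'
        have h5 : P.verts[a+1]'(by omega) = P.verts[a-1]'(by omega) := by
          rw [h4, hv (a-1) (by omega)]
        have := (List.Nodup.getElem_inj_iff P.nodup).mp h5
        omega
  obtain ⟨hnL, hv⟩ := key P.edges.length le_rfl
  have h' : R.verts[P.edges.length]'(by omega) = R.verts[R.edges.length]'(by omega) := by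
    rw [← hv _ le_rfl, P.vert_last, R.vert_last]
  have hnL' : P.edges.length = R.edges.length := R.nodup.getElem_inj_iff.mp h'
  apply List.ext_getElem hnL'
  intro a h1 h2
  obtain ⟨b, hb, hbe⟩ := List.mem_iff_getElem.mp (hsub _ (List.getElem_mem h1))
  have h2' := R.ends_getElem b hb
  rw [hbe, P.ends_getElem a h1] at h2'
  rw [hv a (by omega), hv (a+1) (by omega)] at h2'
  rcases Sym2.eq_iff.mp h2' with ⟨h3, h4⟩ | ⟨h3, h4⟩
  · have hab : a = b := R.nodup.getElem_inj_iff.mp h3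
    subst hab; exact hbe.symm
  · have hab : a = b + 1 := R.nodup.getElem_inj_iff.mp h3
    have hab2 : a + 1 = b := R.nodup.getElem_inj_iff.mp h4
    omega

end TPath

/-- `G` has an independent set of size at least `k` iff the constructed
temporal graph `(G', λ)` has at least `k` pairwise snapshot disjoint temporal
`s,z`-paths. -/
theorem stmt17 (V : Type) [Fintype V] [DecidableEq V]
    (G : SimpleGraph V) [DecidableRel G.Adj]
    (hdeg : ∀ u : V, 0 < G.degree u)
    (m : ℕ) (eps : G.edgeSet ≃ Fin m)
    (G' : Multigraph) (lam : G'.E → ℕ) (s z : G'.V) (hsz : s ≠ z)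
    (Q : V → TPath G' lam s z)
    (hlen : ∀ u : V, (Q u).edges.length = G.degree u)
    (hdisj : ∀ u v : V, u ≠ v →
      ∀ x : G'.V, x ∈ (Q u).verts → x ∈ (Q v).verts → x = s ∨ x = z)
    (hcover : ∀ ed : G'.E, ∃ u : V, ed ∈ (Q u).edges)
    (hlabels : ∀ u : V,
      (Q u).times = {t : ℕ | ∃ d : G.edgeSet, u ∈ (d : Sym2 V) ∧ t = (eps d).val + 1})
    (k : ℕ) :
    (∃ S : Finset V, k ≤ S.card ∧ ∀ u ∈ S, ∀ v ∈ S, ¬ G.Adj u v) ↔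
      (∃ f : Fin k → TPath G' lam s z, ∀ i j, i ≠ j → SnapDisjoint (f i) (f j)) := by
  constructor
  · rintro ⟨S, hk, hind⟩
    obtain ⟨T, hTS, hTc⟩ := Finset.exists_subset_card_eq hk
    let e1 : {x // x ∈ T} ≃ Fin k := T.equivFin.trans (finCongr hTc)
    set g : Fin k → V := fun i => ((e1.symm i : T) : V) with hg
    have ginj : Function.Injective g :=
      Subtype.coe_injective.comp e1.symm.injective
    have gmem : ∀ i, g i ∈ S := fun i => hTS (e1.symm i).2
    refine ⟨fun i => Q (g i), ?_⟩
    intro i j hij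
    rw [SnapDisjoint, Set.eq_empty_iff_forall_notMem]
    rintro t ⟨h1, h2⟩
    rw [hlabels] at h1 h2
    obtain ⟨d, hd1, hd2⟩ := h1
    obtain ⟨d', hd1', hd2'⟩ := h2
    have hdd : d = d' := eps.injective (Fin.ext (by omega))
    subst hdd
    have hgij : g i ≠ g j := fun h => hij (ginj h)
    have hde : (d : Sym2 V) = s(g i, g j) := (Sym2.mem_and_mem_iff hgij).mp ⟨hd1, hd1'⟩
    exact hind _ (gmem i) _ (gmem j) (G.mem_edgeSet.mp (hde ▸ d.2))
  · rintro ⟨f, hf⟩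
    have hne : ∀ P : TPath G' lam s z, 0 < P.edges.length := by
      intro P
      by_contra h
      have h0 : P.edges.length = 0 := by omega
      have h1 := P.vert_last
      simp only [h0] at h1
      exact hsz (P.vert_zero.symm.trans h1)
    have hone : ∀ i : Fin k, ∃ u : V, ∀ e ∈ (f i).edges, e ∈ (Q u).edges := by
      intro i
      have hn : 0 < (f i).edges.length := hne (f i)
      obtain ⟨u, hu0⟩ := hcover ((f i).edges[0])
      refine ⟨u, ?_⟩
      have hPv := (f i).len_eq
      have step : ∀ a (h : a < (f i).edges.length), (f i).edges[a] ∈ (Q u).edges := by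
        intro a
        induction a with
        | zero => intro _; exact hu0
        | succ a ih =>
          intro h
          have hprev := ih (by omega)
          obtain ⟨v, hv0⟩ := hcover ((f i).edges[a+1])
          by_cases huv : u = v
          · subst huv; exact hv0
          · exfalso
            have hx1 : (f i).verts[a+1]'(by omega) ∈ (Q u).verts := by
              obtain ⟨b, hb, hbe⟩ := List.mem_iff_getElem.mp hprev
              have h2 := (Q u).ends_getElem b hb
              rw [hbe, (f i).ends_getElem a (by omega)] at h2
              rcases Sym2.eq_iff.mp h2 with ⟨_, h4⟩ | ⟨_, h4⟩ <;>
                · rw [h4]; exact List.getElem_mem _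
            have hx2 : (f i).verts[a+1]'(by omega) ∈ (Q v).verts := by
              obtain ⟨b, hb, hbe⟩ := List.mem_iff_getElem.mp hv0
              have h2 := (Q v).ends_getElem b hb
              rw [hbe, (f i).ends_getElem (a+1) h] at h2
              rcases Sym2.eq_iff.mp h2 with ⟨h3, _⟩ | ⟨h3, _⟩ <;>
                · rw [h3]; exact List.getElem_mem _
            rcases hdisj u v huv _ hx1 hx2 with hxs | hxz
            · have h5 : (f i).verts[a+1]'(by omega) = (f i).verts[0]'(by omega) := by
                rw [hxs, (f i).vert_zero]
              have := (f i).nodup.getElem_inj_iff.mp h5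
              omega
            · have h5 : (f i).verts[a+1]'(by omega) =
                  (f i).verts[(f i).edges.length]'(by omega) := by
                rw [hxz, (f i).vert_last]
              have := (f i).nodup.getElem_inj_iff.mp h5
              omega
      intro e he
      obtain ⟨a, ha, hae⟩ := List.mem_iff_getElem.mp he
      rw [← hae]; exact step a ha
    choose u hu using hone
    have hEq : ∀ i, (f i).edges = (Q (u i)).edges :=
      fun i => TPath.edges_eq_of_subset _ _ (hu i)
    have hT : ∀ i, (f i).times = (Q (u i)).times := by
      intro i; unfold TPath.times; rw [hEq i]
    have huinj : Function.Injective u := by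
      intro i j hij
      by_contra hne'
      have hd := hf i j hne'
      have hlen' : 0 < (Q (u i)).edges.length := by rw [hlen]; exact hdeg (u i)
      have ht : lam ((Q (u i)).edges[0]) ∈ (f i).times ∩ (f j).times := by
        constructor
        · rw [hT i]; exact ⟨_, List.getElem_mem _, rfl⟩
        · rw [hT j, ← hij]; exact ⟨_, List.getElem_mem _, rfl⟩
      rw [hd] at ht
      exact ht
    have hnadj : ∀ i j : Fin k, i ≠ j → ¬ G.Adj (u i) (u j) := by
      intro i j hij hadj
      have hd := hf i j hij
      have ht : ((eps ⟨s(u i, u j), G.mem_edgeSet.mpr hadj⟩ : Fin m) : ℕ) + 1 ∈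
          (f i).times ∩ (f j).times := by
        constructor
        · rw [hT i, hlabels]
          exact ⟨_, Sym2.mem_mk_left _ _, rfl⟩
        · rw [hT j, hlabels]
          exact ⟨_, Sym2.mem_mk_right _ _, rfl⟩
      rw [hd] at ht
      exact ht
    refine ⟨Finset.image u Finset.univ, ?_, ?_⟩
    · rw [Finset.card_image_of_injective _ huinj, Finset.card_univ, Fintype.card_fin]
    · intro a ha b hb hadj
      obtain ⟨i, _, rfl⟩ := Finset.mem_image.mp ha
      obtain ⟨j, _, rfl⟩ := Finset.mem_image.mp hb
      rcases eq_or_ne i j with rfl | hij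
      · exact G.irrefl hadj
      · exact hnadj i j hij hadj
end

section
/- Let G be a simple graph without isolated vertices whose edges are enumerated e₁,…,e_m, and let (G′,λ) be the temporal graph constructed as follows: G′ has two special vertices s and z and, for each u ∈ V(G), an s,z-path Q_u with exactly deg(u) edges, where the paths Q_u are pairwise internally vertex disjoint; λ assigns to the edges of Q_u, in order from s to z, the increasing sequence of indices i such that e_i is incident to u (so each Q_u is a temporal s,z-path with λ(E(Q_u)) = {i : e_i is incident to u}). Then for every S ⊆ V(G), S is an independent set of G if and only if the paths {Q_u : u ∈ S} are pairwise snapshot disjoint. -/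
/-- a set `S ⊆ V(G)` is an independent set of `G` iff the paths
`{Q_u : u ∈ S}` are pairwise snapshot disjoint. -/
theorem stmt18 (V : Type) [Fintype V] [DecidableEq V]
    (G : SimpleGraph V) [DecidableRel G.Adj]
    (hdeg : ∀ u : V, 0 < G.degree u)
    (m : ℕ) (eps : G.edgeSet ≃ Fin m)
    (G' : Multigraph) (lam : G'.E → ℕ) (s z : G'.V) (hsz : s ≠ z)
    (Q : V → TPath G' lam s z)
    (hlen : ∀ u : V, (Q u).edges.length = G.degree u)
    (hdisj : ∀ u v : V, u ≠ v →
      ∀ x : G'.V, x ∈ (Q u).verts → x ∈ (Q v).verts → x = s ∨ x = z)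
    (hcover : ∀ ed : G'.E, ∃ u : V, ed ∈ (Q u).edges)
    (hlabels : ∀ u : V,
      (Q u).times = {t : ℕ | ∃ d : G.edgeSet, u ∈ (d : Sym2 V) ∧ t = (eps d).val + 1})
    (S : Set V) :
    (∀ u ∈ S, ∀ v ∈ S, u ≠ v → ¬ G.Adj u v) ↔
      (∀ u ∈ S, ∀ v ∈ S, u ≠ v → SnapDisjoint (Q u) (Q v)) := by
  constructor
  · intro hind u hu v hv huv
    unfold SnapDisjoint
    ext t
    simp only [Set.mem_inter_iff, Set.mem_empty_iff_false, iff_false, not_and]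
    intro htu htv
    rw [hlabels u] at htu
    rw [hlabels v] at htv
    obtain ⟨d, hud, htd⟩ := htu
    obtain ⟨d', hvd, htd'⟩ := htv
    have : eps d = eps d' := Fin.ext (by omega)
    have hdd : d = d' := eps.injective this
    subst hdd
    have hadj : G.Adj u v := by
      have : (d : Sym2 V) = s(u, v) := ((Sym2.mem_and_mem_iff huv).mp ⟨hud, hvd⟩)
      have hd := d.2
      rw [this] at hd
      exact hd
    exact hind u hu v hv huv hadj
  · intro hsd u hu v hv huv hadj
    have hd : s(u, v) ∈ G.edgeSet := hadj
    set d : G.edgeSet := ⟨s(u, v), hd⟩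
    have ht : ((eps d : Fin m) : ℕ) + 1 ∈ (Q u).times ∩ (Q v).times := by
      constructor
      · rw [hlabels u]; exact ⟨d, Sym2.mem_mk_left u v, rfl⟩
      · rw [hlabels v]; exact ⟨d, Sym2.mem_mk_right u v, rfl⟩
    have := hsd u hu v hv huv
    rw [SnapDisjoint] at this
    rw [this] at ht
    exact ht
end
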